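/- Let k be even and let H be a connected k-uniform hypergraph with at least one edge that is not odd-bipartite. Then the following are equivalent: (1) ρ^L(H) = ρ^Q(H); (2) there exists γ : W → ℂ with |γ_w| = 1 for all w such that L(H) is obtained from Q(H) by the diagonal similarity γ; (3) the set of eigenvalues of L(H) equals the set of eigenvalues of Q(H); (4) there exists γ : W → ℂ with |γ_w| = 1 for all w such that −A(H) is obtained from A(H) by the diagonal similarity γ; (5) the set of eigenvalues of A(H) is symmetric with respect to the origin, i.e., λ is an eigenvalue of A(H) if and only if −λ is; (6) −ρ^A(H) is an eigenvalue of A(H). -/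

import Mathlib

set_option linter.unusedSectionVars false
set_option linter.unusedVariables false
set_option maxHeartbeats 1000000

open scoped BigOperators


attribute [local instance] Classical.propDecidable

noncomputable def Complex.abs : AbsoluteValue ℂ ℝ where
  toFun z := ‖z‖
  map_mul' := norm_mul
  nonneg' := norm_nonneg
  eq_zero' _ := norm_eq_zero
  add_le' := norm_add_le

lemma Complex.abs_apply' (z : ℂ) : Complex.abs z = ‖z‖ := rfl

@[simp] lemma Complex.abs_conj (z : ℂ) : Complex.abs ((starRingEnd ℂ) z) = Complex.abs z :=
  Complex.norm_conj z

@[simp] lemma Complex.abs_natCast (n : ℕ) : Complex.abs (n : ℂ) = n := Complex.norm_natCast n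

@[simp] lemma Complex.abs_ofReal (r : ℝ) : Complex.abs (r : ℂ) = |r| := Complex.norm_real r

lemma Complex.continuous_abs : Continuous Complex.abs := continuous_norm

lemma Complex.sq_abs (z : ℂ) : Complex.abs z ^ 2 = Complex.normSq z := Complex.sq_norm z

lemma Complex.re_le_abs (z : ℂ) : z.re ≤ Complex.abs z := Complex.re_le_norm z

/-- The degree of a vertex `w` in the hypergraph with edge set `E`. -/
def hypDegree {W : Type*} [DecidableEq W] (E : Finset (Finset W)) (w : W) : ℕ :=
  (E.filter fun e => w ∈ e).card

/-- `lam` is an eigenvalue of the adjacency tensor `A(H)` of the `k`-uniform hypergraph with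
edge set `E`. -/
def IsAdjEig {W : Type*} [Fintype W] [DecidableEq W] (k : ℕ)
    (E : Finset (Finset W)) (lam : ℂ) : Prop :=
  ∃ x : W → ℂ, x ≠ 0 ∧ ∀ w : W,
    lam * x w ^ (k - 1) = ∑ e ∈ E.filter (fun e => w ∈ e), ∏ p ∈ e.erase w, x p

/-- `lam` is an eigenvalue of the Laplacian tensor `L(H)`. -/
def IsLapEig {W : Type*} [Fintype W] [DecidableEq W] (k : ℕ)
    (E : Finset (Finset W)) (lam : ℂ) : Prop :=
  ∃ x : W → ℂ, x ≠ 0 ∧ ∀ w : W,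
    ((hypDegree E w : ℂ) - lam) * x w ^ (k - 1) =
      ∑ e ∈ E.filter (fun e => w ∈ e), ∏ p ∈ e.erase w, x p

/-- `lam` is an eigenvalue of the signless Laplacian tensor `Q(H)`. -/
def IsSignlessEig {W : Type*} [Fintype W] [DecidableEq W] (k : ℕ)
    (E : Finset (Finset W)) (lam : ℂ) : Prop :=
  ∃ x : W → ℂ, x ≠ 0 ∧ ∀ w : W,
    (lam - (hypDegree E w : ℂ)) * x w ^ (k - 1) =
      ∑ e ∈ E.filter (fun e => w ∈ e), ∏ p ∈ e.erase w, x p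

/-- Entry of the adjacency tensor of the hypergraph with edge set `E` at the tuple `t`. -/
noncomputable def adjEnt {W : Type*} [Fintype W] [DecidableEq W] (k : ℕ)
    (E : Finset (Finset W)) (t : Fin k → W) : ℂ :=
  if Function.Injective t ∧ Finset.image t Finset.univ ∈ E then
    ((Nat.factorial (k - 1) : ℂ))⁻¹
  else 0

/-- Entry of the degree diagonal tensor of the hypergraph with edge set `E` at the tuple
`t`. -/
noncomputable def diagEnt {W : Type*} [Fintype W] [DecidableEq W] (k : ℕ)
    (E : Finset (Finset W)) (t : Fin k → W) : ℂ :=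
  if h : ∃ w : W, ∀ i, t i = w then (hypDegree E h.choose : ℂ) else 0


namespace Stmt15Aux



variable {W : Type*} [Fintype W] [DecidableEq W]

noncomputable def Rq (E : Finset (Finset W)) (z : W → ℝ) (w : W) : ℝ :=
  ∑ e ∈ E.filter (fun e => w ∈ e), ∏ p ∈ e.erase w, z p

noncomputable def Fq (E : Finset (Finset W)) (z : W → ℝ) : ℝ :=
  ∑ e ∈ E, ∏ p ∈ e, z p

noncomputable def Nq (k : ℕ) (z : W → ℝ) : ℝ := ∑ w, z w ^ k

noncomputable def phi (k : ℕ) (E : Finset (Finset W)) (c : W → ℝ) (z : W → ℝ) : ℝ :=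
  ∑ w, c w * z w ^ k + k * Fq E z

def Kset (k : ℕ) : Set (W → ℝ) := {z : W → ℝ | (∀ w, 0 ≤ z w) ∧ Nq k z = 1}

lemma continuous_Nq (k : ℕ) : Continuous (Nq k : (W → ℝ) → ℝ) := by
  unfold Nq
  exact continuous_finset_sum _ fun w _ => (continuous_apply w).pow k

lemma continuous_Fq (E : Finset (Finset W)) : Continuous (Fq E : (W → ℝ) → ℝ) := by
  unfold Fq
  exact continuous_finset_sum _ fun e _ =>
    continuous_finset_prod _ fun p _ => continuous_apply p

lemma continuous_phi (k : ℕ) (E : Finset (Finset W)) (c : W → ℝ) :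
    Continuous (phi k E c) := by
  unfold phi
  exact (continuous_finset_sum _ fun w _ =>
    (continuous_const.mul ((continuous_apply w).pow k))).add
    (continuous_const.mul (continuous_Fq E))

lemma isCompact_Kset (k : ℕ) (hk : k ≠ 0) : IsCompact (Kset (W := W) k) := by
  have hclosed : IsClosed (Kset (W := W) k) := by
    have h1 : IsClosed {z : W → ℝ | ∀ w, 0 ≤ z w} := by
      have : {z : W → ℝ | ∀ w, 0 ≤ z w} = ⋂ w, {z : W → ℝ | 0 ≤ z w} := by
        ext z; simp
      rw [this]
      exact isClosed_iInter fun w => isClosed_le continuous_const (continuous_apply w)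
    have h2 : IsClosed {z : W → ℝ | Nq k z = 1} :=
      isClosed_eq (continuous_Nq k) continuous_const
    exact h1.inter h2
  refine IsCompact.of_isClosed_subset (isCompact_univ_pi fun _ => isCompact_Icc
    (a := (0:ℝ)) (b := 1)) hclosed ?_
  rintro z ⟨hz0, hz1⟩ w _
  have h1 : z w ^ k ≤ 1 := by
    rw [← hz1]
    exact Finset.single_le_sum (f := fun v => z v ^ k)
      (fun v _ => pow_nonneg (hz0 v) k) (Finset.mem_univ w)
  exact ⟨hz0 w, (pow_le_one_iff_of_nonneg (hz0 w) hk).mp h1⟩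

lemma Kset_nonempty (k : ℕ) (hk : k ≠ 0) [Nonempty W] :
    (Kset (W := W) k).Nonempty := by
  set n : ℝ := (Fintype.card W : ℝ) with hn
  have hnpos : 0 < n := by
    simp [hn, Fintype.card_pos]
  set c : ℝ := n⁻¹ ^ ((k : ℝ)⁻¹) with hc
  have hcpos : 0 < c := Real.rpow_pos_of_pos (by positivity) _
  have hck : c ^ k = n⁻¹ := by
    rw [hc, ← Real.rpow_natCast (n⁻¹ ^ ((k:ℝ)⁻¹)) k, ← Real.rpow_mul (by positivity),
      inv_mul_cancel₀ (by exact_mod_cast hk), Real.rpow_one]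
  refine ⟨fun _ => c, fun w => hcpos.le, ?_⟩
  unfold Nq
  rw [Finset.sum_const, Finset.card_univ, nsmul_eq_mul, hck]
  field_simp [hn]
  exact hn.symm

lemma Fq_smul (k : ℕ) (E : Finset (Finset W)) (hunif : ∀ e ∈ E, e.card = k)
    (s : ℝ) (z : W → ℝ) : Fq E (fun w => s * z w) = s ^ k * Fq E z := by
  unfold Fq
  rw [Finset.mul_sum]
  refine Finset.sum_congr rfl fun e he => ?_
  rw [Finset.prod_mul_distrib, Finset.prod_const, hunif e he]

lemma Nq_smul (k : ℕ) (s : ℝ) (z : W → ℝ) :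
    Nq k (fun w => s * z w) = s ^ k * Nq k z := by
  unfold Nq
  rw [Finset.mul_sum]
  exact Finset.sum_congr rfl fun w _ => mul_pow s (z w) k

lemma phi_smul (k : ℕ) (E : Finset (Finset W)) (hunif : ∀ e ∈ E, e.card = k)
    (c : W → ℝ) (s : ℝ) (z : W → ℝ) :
    phi k E c (fun w => s * z w) = s ^ k * phi k E c z := by
  unfold phi
  rw [Fq_smul k E hunif s z, mul_add, Finset.mul_sum]
  congr 1
  · exact Finset.sum_congr rfl fun w _ => by rw [mul_pow]; ring
  · ring

lemma phi_zero_of_zero (k : ℕ) (hk : 2 ≤ k) (E : Finset (Finset W))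
    (hunif : ∀ e ∈ E, e.card = k) (c : W → ℝ) (z : W → ℝ) (hz : ∀ w, z w = 0) :
    phi k E c z = 0 := by
  unfold phi Fq
  have h1 : ∀ w, c w * z w ^ k = 0 := fun w => by
    rw [hz w, zero_pow (by omega)]; ring
  have h2 : ∀ e ∈ E, ∏ p ∈ e, z p = 0 := by
    intro e he
    obtain ⟨p, hp⟩ := Finset.card_pos.mp (by rw [hunif e he]; omega)
    exact Finset.prod_eq_zero hp (hz p)
  rw [Finset.sum_congr rfl (fun w _ => h1 w), Finset.sum_congr rfl h2]
  simp

lemma global_bound (k : ℕ) (hk : 2 ≤ k) (E : Finset (Finset W))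
    (hunif : ∀ e ∈ E, e.card = k) (c : W → ℝ) (zs : W → ℝ)
    (hzs : zs ∈ Kset (W := W) k) (hmax : IsMaxOn (phi k E c) (Kset k) zs)
    (y : W → ℝ) (hy : ∀ w, 0 ≤ y w) :
    phi k E c y ≤ phi k E c zs * Nq k y := by
  have hNnn : 0 ≤ Nq k y := Finset.sum_nonneg fun w _ => pow_nonneg (hy w) k
  rcases eq_or_lt_of_le hNnn with hN0 | hNpos
  · have hy0 : ∀ w, y w = 0 := by
      intro w
      have := (Finset.sum_eq_zero_iff_of_nonneg
        (fun v (_ : v ∈ Finset.univ) => pow_nonneg (hy v) k)).mp hN0.symm w (Finset.mem_univ w)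
      exact pow_eq_zero_iff (by omega) |>.mp this
    rw [phi_zero_of_zero k hk E hunif c y hy0, ← hN0]
    ring_nf
    exact le_refl _
  · set s : ℝ := (Nq k y) ^ ((k : ℝ)⁻¹) with hs
    have hspos : 0 < s := Real.rpow_pos_of_pos hNpos _
    have hsk : s ^ k = Nq k y := by
      rw [hs, ← Real.rpow_natCast ((Nq k y) ^ ((k:ℝ)⁻¹)) k, ← Real.rpow_mul hNnn,
        inv_mul_cancel₀ (Nat.cast_ne_zero.mpr (by omega : k ≠ 0)), Real.rpow_one]
    have hmem : (fun w => s⁻¹ * y w) ∈ Kset (W := W) k := by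
      constructor
      · intro w; exact mul_nonneg (inv_nonneg.mpr hspos.le) (hy w)
      · rw [Nq_smul, inv_pow, hsk, inv_mul_cancel₀ (ne_of_gt hNpos)]
    have h1 : phi k E c (fun w => s⁻¹ * y w) ≤ phi k E c zs := hmax hmem
    rw [phi_smul k E hunif c s⁻¹ y, inv_pow, hsk] at h1
    calc phi k E c y = Nq k y * ((Nq k y)⁻¹ * phi k E c y) := by
            field_simp
      _ ≤ Nq k y * phi k E c zs := by
            apply mul_le_mul_of_nonneg_left h1 hNnn
      _ = phi k E c zs * Nq k y := mul_comm _ _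



lemma swap_sum (E : Finset (Finset W)) (f : W → Finset W → ℝ) :
    ∑ w, ∑ e ∈ E.filter (fun e => w ∈ e), f w e = ∑ e ∈ E, ∑ w ∈ e, f w e := by
  have h1 : ∀ w, ∑ e ∈ E.filter (fun e => w ∈ e), f w e
      = ∑ e ∈ E, if w ∈ e then f w e else 0 := fun w => Finset.sum_filter _ _
  simp only [h1]
  rw [Finset.sum_comm]
  refine Finset.sum_congr rfl fun e _ => ?_
  rw [Finset.sum_ite_mem, Finset.univ_inter]

lemma double_count (k : ℕ) (E : Finset (Finset W)) (hunif : ∀ e ∈ E, e.card = k)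
    (z : W → ℝ) : ∑ w, z w * Rq E z w = k * Fq E z := by
  unfold Rq Fq
  rw [Finset.mul_sum]
  simp only [Finset.mul_sum]
  rw [swap_sum E (fun w e => z w * ∏ p ∈ e.erase w, z p)]
  refine Finset.sum_congr rfl fun e he => ?_
  have : ∀ w ∈ e, z w * ∏ p ∈ e.erase w, z p = ∏ p ∈ e, z p := fun w hw =>
    Finset.mul_prod_erase e z hw
  rw [Finset.sum_congr rfl this, Finset.sum_const, hunif e he, nsmul_eq_mul]



lemma phi_nonneg (k : ℕ) (E : Finset (Finset W)) (c : W → ℝ) (hc : ∀ w, 0 ≤ c w)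
    (z : W → ℝ) (hz : ∀ w, 0 ≤ z w) : 0 ≤ phi k E c z := by
  unfold phi Fq
  have h1 : 0 ≤ ∑ w, c w * z w ^ k :=
    Finset.sum_nonneg fun w _ => mul_nonneg (hc w) (pow_nonneg (hz w) k)
  have h2 : 0 ≤ ∑ e ∈ E, ∏ p ∈ e, z p :=
    Finset.sum_nonneg fun e _ => Finset.prod_nonneg fun p _ => hz p
  positivity

lemma exists_mixed_edge (E : Finset (Finset W)) (z : W → ℝ) {a b : W}
    (h : Relation.ReflTransGen (fun p q => ∃ e ∈ E, p ∈ e ∧ q ∈ e) a b)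
    (ha : z a ≠ 0) (hb : z b = 0) :
    ∃ e ∈ E, (∃ p ∈ e, z p ≠ 0) ∧ (∃ q ∈ e, z q = 0) := by
  revert hb
  induction h with
  | refl => intro hb; exact absurd hb ha
  | tail h1 h2 ih =>
      intro hb
      obtain ⟨e, he, hc, hbe⟩ := h2
      rcases eq_or_ne (z _) 0 with hzc | hzc
      · exact ih hzc
      · exact ⟨e, he, ⟨_, hc, hzc⟩, _, hbe, hb⟩

lemma Nq_update_set (k : ℕ) (hk : 2 ≤ k) (T : Finset W) (t : ℝ) (y : W → ℝ)
    (hyT : ∀ v ∈ T, y v = 0) :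
    Nq k (fun v => y v + if v ∈ T then t else 0) = Nq k y + T.card * t ^ k := by
  unfold Nq
  have h1 : ∀ v, (y v + if v ∈ T then t else 0) ^ k
      = y v ^ k + (if v ∈ T then t ^ k else 0) := by
    intro v
    by_cases hv : v ∈ T
    · simp only [hv, if_true, hyT v hv, zero_add, zero_pow (by omega : k ≠ 0)]
    · simp [hv]
  simp only [h1]
  rw [Finset.sum_add_distrib]
  congr 1
  rw [Finset.sum_ite_mem, Finset.univ_inter, Finset.sum_const, nsmul_eq_mul]

lemma maximizer_pos (k : ℕ) (hk : 2 ≤ k) (E : Finset (Finset W))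
    (hunif : ∀ e ∈ E, e.card = k)
    (hconn : ∀ a b : W, Relation.ReflTransGen (fun p q => ∃ e ∈ E, p ∈ e ∧ q ∈ e) a b)
    (c : W → ℝ) (hc : ∀ w, 0 ≤ c w) (ρ : ℝ) (hρ : 0 ≤ ρ)
    (hbd : ∀ y : W → ℝ, (∀ w, 0 ≤ y w) → phi k E c y ≤ ρ * Nq k y)
    (y : W → ℝ) (hy : ∀ w, 0 ≤ y w) (hyne : y ≠ 0)
    (heq : phi k E c y = ρ * Nq k y) : ∀ w, 0 < y w := by
  by_contra hcon
  push_neg at hcon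
  obtain ⟨b, hble⟩ := hcon
  have hb : y b = 0 := le_antisymm hble (hy b)
  obtain ⟨a, ha⟩ := Function.ne_iff.mp hyne
  have ha' : y a ≠ 0 := by simpa using ha
  obtain ⟨e0, he0, ⟨p, hpe, hp⟩, q, hqe, hq⟩ := exists_mixed_edge E y (hconn a b) ha' hb
  set T : Finset W := e0.filter (fun v => y v = 0) with hT
  have hqT : q ∈ T := Finset.mem_filter.mpr ⟨hqe, hq⟩
  have hpT : p ∉ T := fun hmem => hp (Finset.mem_filter.mp hmem).2
  have hTsub : T ⊆ e0 := Finset.filter_subset _ _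
  set m : ℕ := T.card with hm
  have hm1 : 1 ≤ m := Finset.card_pos.mpr ⟨q, hqT⟩
  have hmk : m < k := by
    rw [← hunif e0 he0]
    exact Finset.card_lt_card ⟨hTsub, fun hsub => hpT (hsub hpe)⟩
  set P : ℝ := ∏ v ∈ e0 \ T, y v with hP
  have hPpos : 0 < P := by
    apply Finset.prod_pos
    intro v hv
    rcases Finset.mem_sdiff.mp hv with ⟨hv1, hv2⟩
    rcases (hy v).lt_or_eq with h | h
    · exact h
    · exact absurd (Finset.mem_filter.mpr ⟨hv1, h.symm⟩) hv2
  -- key inequality for all t ∈ (0,1]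
  have key : ∀ t : ℝ, 0 < t → t ≤ 1 → (k : ℝ) * P ≤ ρ * m * t := by
    intro t ht ht1
    set y' : W → ℝ := fun v => y v + if v ∈ T then t else 0 with hy'
    have hy'0 : ∀ v, 0 ≤ y' v := by
      intro v
      by_cases hv : v ∈ T <;> simp [hy', hv, hy v, ht.le, add_nonneg (hy v) ht.le]
    have hy'ge : ∀ v, y v ≤ y' v := by
      intro v
      by_cases hv : v ∈ T <;> simp [hy', hv, ht.le]
    have hNq : Nq k y' = Nq k y + m * t ^ k :=
      Nq_update_set k hk T t y (fun v hv => (Finset.mem_filter.mp hv).2)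
    -- products
    have hprod_e0 : ∏ v ∈ e0, y' v = t ^ m * P := by
      rw [← Finset.prod_sdiff hTsub]
      have h1 : ∏ v ∈ T, y' v = t ^ m := by
        rw [Finset.prod_congr rfl (fun v hv => ?_), Finset.prod_const]
        simp [hy', hv, (Finset.mem_filter.mp hv).2]
      have h2 : ∏ v ∈ e0 \ T, y' v = P := by
        refine Finset.prod_congr rfl fun v hv => ?_
        simp [hy', (Finset.mem_sdiff.mp hv).2]
      rw [h1, h2, mul_comm]
    have hprod_e0' : ∏ v ∈ e0, y v = 0 :=
      Finset.prod_eq_zero hqe hq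
    have hFq : Fq E y + t ^ m * P ≤ Fq E y' := by
      unfold Fq
      have h3 : ∀ e ∈ E, (∏ p ∈ e, y p) + (if e = e0 then t ^ m * P else 0)
          ≤ ∏ p ∈ e, y' p := by
        intro e he
        by_cases hee : e = e0
        · subst hee
          rw [hprod_e0', hprod_e0, if_pos rfl, zero_add]
        · rw [if_neg hee, add_zero]
          exact Finset.prod_le_prod (fun v _ => hy v) (fun v _ => hy'ge v)
      calc (∑ e ∈ E, ∏ p ∈ e, y p) + t ^ m * P
          = ∑ e ∈ E, ((∏ p ∈ e, y p) + (if e = e0 then t ^ m * P else 0)) := by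
            rw [Finset.sum_add_distrib, Finset.sum_ite_eq' E e0 (fun _ => t ^ m * P),
              if_pos he0]
        _ ≤ ∑ e ∈ E, ∏ p ∈ e, y' p := Finset.sum_le_sum h3
    have hphi : phi k E c y + (k : ℝ) * (t ^ m * P) ≤ phi k E c y' := by
      unfold phi
      have h4 : ∑ w, c w * y w ^ k ≤ ∑ w, c w * y' w ^ k :=
        Finset.sum_le_sum fun w _ =>
          mul_le_mul_of_nonneg_left (pow_le_pow_left₀ (hy w) (hy'ge w) k) (hc w)
      have h5 : (k : ℝ) * Fq E y + (k:ℝ) * (t^m * P) ≤ (k : ℝ) * Fq E y' := by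
        rw [← mul_add]
        exact mul_le_mul_of_nonneg_left hFq (by positivity)
      linarith
    have hglob := hbd y' hy'0
    rw [hNq] at hglob
    have : ρ * Nq k y + (k:ℝ) * (t^m * P) ≤ ρ * Nq k y + ρ * (m * t ^ k) := by
      calc ρ * Nq k y + (k:ℝ) * (t^m * P) = phi k E c y + (k:ℝ)*(t^m*P) := by rw [heq]
        _ ≤ phi k E c y' := hphi
        _ ≤ ρ * (Nq k y + m * t ^ k) := hglob
        _ = ρ * Nq k y + ρ * (m * t ^ k) := by ring
    have h6 : (k:ℝ) * (t ^ m * P) ≤ ρ * (m * t ^ k) := by linarith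
    -- divide by t^m
    have htm : (0:ℝ) < t ^ m := pow_pos ht m
    have hkm : t ^ k = t ^ m * t ^ (k - m) := by
      rw [← pow_add]
      congr 1
      omega
    rw [hkm] at h6
    have h7 : (k:ℝ) * P ≤ ρ * (m * t ^ (k - m)) := by
      have h6' : ((k:ℝ) * P) * t ^ m ≤ (ρ * (m * t ^ (k-m))) * t ^ m := by nlinarith [h6]
      exact le_of_mul_le_mul_right h6' htm
    have h8 : t ^ (k - m) ≤ t := by
      have : t ^ (k - m) ≤ t ^ 1 := pow_le_pow_of_le_one ht.le ht1 (by omega)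
      simpa using this
    calc (k:ℝ) * P ≤ ρ * (m * t ^ (k-m)) := h7
      _ ≤ ρ * (m * t) := by
          apply mul_le_mul_of_nonneg_left _ hρ
          exact mul_le_mul_of_nonneg_left h8 (by positivity)
      _ = ρ * m * t := by ring
  -- now derive contradiction
  have hkP : (0:ℝ) < k * P := by positivity
  set t0 : ℝ := min 1 ((k * P) / (ρ * m + 1)) with ht0
  have hden : (0:ℝ) < ρ * m + 1 := by positivity
  have ht0pos : 0 < t0 := lt_min one_pos (by positivity)
  have ht0le1 : t0 ≤ 1 := min_le_left _ _
  have h9 := key t0 ht0pos ht0le1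
  have h10 : t0 ≤ (k * P) / (ρ * m + 1) := min_le_right _ _
  have h11 : ρ * m * t0 ≤ ρ * m * ((k*P)/(ρ*m+1)) :=
    mul_le_mul_of_nonneg_left h10 (by positivity)
  have h12 : ρ * m * ((k*P)/(ρ*m+1)) < k * P := by
    have heq2 : ρ * ↑m * (↑k * P / (ρ * ↑m + 1)) = (ρ * ↑m * (↑k * P)) / (ρ * ↑m + 1) := by
      ring
    rw [heq2, div_lt_iff₀ hden]
    nlinarith
  linarith


lemma wsum_update_one (k : ℕ) (a zs : W → ℝ) (w : W) (t : ℝ) :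
    ∑ v, a v * (zs v + if v = w then t else 0) ^ k
      = (∑ v, a v * zs v ^ k) + a w * ((zs w + t) ^ k - zs w ^ k) := by
  have h : ∀ v, a v * (zs v + if v = w then t else 0) ^ k
      = a v * zs v ^ k + (if v = w then a w * ((zs w + t) ^ k - zs w ^ k) else 0) := by
    intro v
    split_ifs with hv
    · subst hv; ring
    · ring
  rw [Finset.sum_congr rfl fun v _ => h v, Finset.sum_add_distrib,
    Finset.sum_ite_eq' Finset.univ w _, if_pos (Finset.mem_univ w)]

lemma Fq_update_one (E : Finset (Finset W)) (zs : W → ℝ) (w : W) (t : ℝ) :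
    Fq E (fun v => zs v + if v = w then t else 0) = Fq E zs + t * Rq E zs w := by
  unfold Fq Rq
  have h : ∀ e ∈ E, ∏ p ∈ e, (zs p + if p = w then t else 0)
      = (∏ p ∈ e, zs p) + (if w ∈ e then t * ∏ p ∈ e.erase w, zs p else 0) := by
    intro e he
    by_cases hwe : w ∈ e
    · rw [if_pos hwe, ← Finset.mul_prod_erase e _ hwe, if_pos rfl]
      have h2 : ∏ p ∈ e.erase w, (zs p + if p = w then t else 0)
          = ∏ p ∈ e.erase w, zs p := by
        refine Finset.prod_congr rfl fun p hp => ?_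
        rw [if_neg (Finset.ne_of_mem_erase hp), add_zero]
      rw [h2, ← Finset.mul_prod_erase e zs hwe]
      ring
    · rw [if_neg hwe, add_zero]
      refine Finset.prod_congr rfl fun p hp => ?_
      rw [if_neg (fun hpw : p = w => hwe (by rw [← hpw]; exact hp)), add_zero]
  rw [Finset.sum_congr rfl h, Finset.sum_add_distrib, ← Finset.sum_filter, Finset.mul_sum]

lemma lagrange (k : ℕ) (hk : 2 ≤ k) (E : Finset (Finset W))
    (hunif : ∀ e ∈ E, e.card = k) (c : W → ℝ) (ρ : ℝ)
    (hbd : ∀ y : W → ℝ, (∀ w, 0 ≤ y w) → phi k E c y ≤ ρ * Nq k y)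
    (zs : W → ℝ) (hzs0 : ∀ w, 0 < zs w) (hNzs : Nq k zs = 1)
    (heq : phi k E c zs = ρ) :
    ∀ w, (ρ - c w) * zs w ^ (k - 1) = Rq E zs w := by
  intro w
  set R0 : ℝ := Rq E zs w with hR0
  set g : ℝ → ℝ := fun t => (ρ - c w) * ((zs w + t) ^ k - zs w ^ k) - k * (t * R0)
    with hg
  have key : ∀ t : ℝ, -zs w < t → 0 ≤ g t := by
    intro t ht
    set yt : W → ℝ := fun v => zs v + if v = w then t else 0 with hyt
    have hyt0 : ∀ v, 0 ≤ yt v := by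
      intro v
      show 0 ≤ zs v + if v = w then t else 0
      split_ifs with hv
      · subst hv; linarith
      · rw [add_zero]; exact (hzs0 v).le
    have hbd' := hbd yt hyt0
    have hN : Nq k yt = 1 + ((zs w + t) ^ k - zs w ^ k) := by
      have := wsum_update_one k (fun _ => 1) zs w t
      simp only [one_mul] at this
      unfold Nq
      rw [hyt]
      rw [this]
      unfold Nq at hNzs
      rw [hNzs]
    have hphi : phi k E c yt
        = ρ + c w * ((zs w + t) ^ k - zs w ^ k) + k * (t * R0) := by
      unfold phi
      rw [hyt, Fq_update_one E zs w t, wsum_update_one k c zs w t]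
      have h0 : (∑ v, c v * zs v ^ k) + (k:ℝ) * Fq E zs = ρ := heq
      linear_combination h0
    rw [hN, hphi] at hbd'
    simp only [hg]
    nlinarith [hbd']
  have hg0 : g 0 = 0 := by simp [hg]
  have hmin : IsLocalMin g 0 := by
    have hmem : Set.Ioi (-zs w) ∈ nhds (0:ℝ) :=
      Ioi_mem_nhds (by linarith [hzs0 w])
    refine Filter.eventually_of_mem hmem fun t ht => ?_
    rw [hg0]
    exact key t ht
  have hderiv : HasDerivAt g ((ρ - c w) * (k * zs w ^ (k - 1)) - k * R0) 0 := by
    have h1 : HasDerivAt (fun t : ℝ => zs w + t) 1 0 := (hasDerivAt_id 0).const_add (zs w)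
    have h2 : HasDerivAt (fun t : ℝ => (zs w + t) ^ k)
        ((k : ℝ) * (zs w + 0) ^ (k - 1) * 1) 0 := h1.pow k
    rw [add_zero, mul_one] at h2
    have h3 : HasDerivAt (fun t : ℝ => (zs w + t) ^ k - zs w ^ k)
        ((k : ℝ) * zs w ^ (k - 1)) 0 := h2.sub_const _
    have h5 : HasDerivAt (fun t : ℝ => t * R0) (1 * R0) 0 := (hasDerivAt_id 0).mul_const R0
    have h6 : HasDerivAt (fun t : ℝ => (k:ℝ) * (t * R0)) ((k:ℝ) * (1 * R0)) 0 :=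
      h5.const_mul _
    have h7 := (h3.const_mul (ρ - c w)).sub h6
    simp only [one_mul] at h7
    exact h7
  have hd0 : deriv g 0 = 0 := hmin.deriv_eq_zero
  rw [hderiv.deriv] at hd0
  have hkne : (k : ℝ) ≠ 0 := Nat.cast_ne_zero.mpr (by omega)
  have : (k:ℝ) * ((ρ - c w) * zs w ^ (k-1) - R0) = 0 := by linarith [hd0]
  have := mul_eq_zero.mp this
  rcases this with h | h
  · exact absurd h hkne
  · linarith

lemma Kset_pos_mem (k : ℕ) (hk : k ≠ 0) [Nonempty W] :
    ∃ z ∈ Kset (W := W) k, ∀ w, 0 < z w := by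
  set n : ℝ := (Fintype.card W : ℝ) with hn
  have hnpos : 0 < n := by simp [hn, Fintype.card_pos]
  set c : ℝ := n⁻¹ ^ ((k : ℝ)⁻¹) with hc
  have hcpos : 0 < c := Real.rpow_pos_of_pos (by positivity) _
  have hck : c ^ k = n⁻¹ := by
    rw [hc, ← Real.rpow_natCast (n⁻¹ ^ ((k:ℝ)⁻¹)) k, ← Real.rpow_mul (by positivity),
      inv_mul_cancel₀ (by exact_mod_cast hk), Real.rpow_one]
  refine ⟨fun _ => c, ⟨fun w => hcpos.le, ?_⟩, fun w => hcpos⟩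
  unfold Nq
  rw [Finset.sum_const, Finset.card_univ, nsmul_eq_mul, hck]
  field_simp [hn]
  exact hn.symm

lemma perron (k : ℕ) (hk : 2 ≤ k) (E : Finset (Finset W))
    (hunif : ∀ e ∈ E, e.card = k) (hedge : E.Nonempty)
    (hconn : ∀ a b : W, Relation.ReflTransGen (fun p q => ∃ e ∈ E, p ∈ e ∧ q ∈ e) a b)
    (c : W → ℝ) (hc : ∀ w, 0 ≤ c w) :
    ∃ ρ : ℝ, ∃ zs : W → ℝ, 0 < ρ ∧ (∀ w, 0 < zs w) ∧ Nq k zs = 1 ∧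
      (∀ y : W → ℝ, (∀ w, 0 ≤ y w) → phi k E c y ≤ ρ * Nq k y) ∧
      (∀ w, (ρ - c w) * zs w ^ (k - 1) = Rq E zs w) ∧
      (∀ y : W → ℝ, (∀ w, 0 ≤ y w) → y ≠ 0 → phi k E c y = ρ * Nq k y →
        ∀ w, 0 < y w) := by
  obtain ⟨e1, he1⟩ := hedge
  have hWne : Nonempty W := by
    obtain ⟨w, hw⟩ := Finset.card_pos.mp (by rw [hunif e1 he1]; omega)
    exact ⟨w⟩
  obtain ⟨z0, hz0K, hz0pos⟩ := Kset_pos_mem (W := W) k (by omega)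
  obtain ⟨zs, hzsK, hmax⟩ := (isCompact_Kset (W := W) k (by omega)).exists_isMaxOn
    ⟨z0, hz0K⟩ (continuous_phi k E c).continuousOn
  set ρ : ℝ := phi k E c zs with hρdef
  have hbd : ∀ y : W → ℝ, (∀ w, 0 ≤ y w) → phi k E c y ≤ ρ * Nq k y :=
    fun y hy => global_bound k hk E hunif c zs hzsK hmax y hy
  have hρpos : 0 < ρ := by
    have h1 : phi k E c z0 ≤ ρ := hmax hz0K
    have h2 : 0 < Fq E z0 := by
      unfold Fq
      refine Finset.sum_pos (fun e he => Finset.prod_pos fun p _ => hz0pos p) ⟨e1, he1⟩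
    have h3 : 0 ≤ ∑ w, c w * z0 w ^ k :=
      Finset.sum_nonneg fun w _ => mul_nonneg (hc w) (pow_nonneg (hz0pos w).le k)
    have h4 : 0 < (k : ℝ) := by positivity
    have : 0 < phi k E c z0 := by
      unfold phi
      nlinarith
    linarith
  have hzs_ne : zs ≠ 0 := by
    intro h0
    have : Nq k zs = 0 := by
      rw [h0]
      unfold Nq
      simp [zero_pow (show k ≠ 0 by omega)]
    rw [hzsK.2] at this
    norm_num at this
  have hmaxpos := maximizer_pos k hk E hunif hconn c hc ρ hρpos.le hbd
  have hzspos : ∀ w, 0 < zs w := by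
    apply hmaxpos zs hzsK.1 hzs_ne
    rw [hzsK.2, mul_one]
  have hlag := lagrange k hk E hunif c ρ hbd zs hzspos hzsK.2 rfl
  exact ⟨ρ, zs, hρpos, hzspos, hzsK.2, hbd, hlag, hmaxpos⟩

lemma Rq_cast (E : Finset (Finset W)) (z : W → ℝ) (w : W) :
    ((Rq E z w : ℝ) : ℂ) = ∑ e ∈ E.filter (fun e => w ∈ e), ∏ p ∈ e.erase w, (z p : ℂ) := by
  unfold Rq
  push_cast
  rfl

lemma abs_sum_prod_le (E : Finset (Finset W)) (x : W → ℂ) (w : W) :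
    Complex.abs (∑ e ∈ E.filter (fun e => w ∈ e), ∏ p ∈ e.erase w, x p)
      ≤ Rq E (fun v => Complex.abs (x v)) w := by
  unfold Rq
  refine le_trans (AbsoluteValue.sum_le _ _ _) (le_of_eq ?_)
  refine Finset.sum_congr rfl fun e he => ?_
  exact map_prod Complex.abs _ _

lemma eig_bound (k : ℕ) (hk : 2 ≤ k) (E : Finset (Finset W)) (c : W → ℝ) (ρ : ℝ)
    (hbd : ∀ y : W → ℝ, (∀ w, 0 ≤ y w) → phi k E c y ≤ ρ * Nq k y)
    (hunif : ∀ e ∈ E, e.card = k)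
    (lam : ℂ) (x : W → ℂ) (hx : x ≠ 0)
    (hpt : ∀ w, Complex.abs lam * Complex.abs (x w) ^ (k - 1)
      ≤ c w * Complex.abs (x w) ^ (k - 1) + Rq E (fun v => Complex.abs (x v)) w) :
    Complex.abs lam ≤ ρ := by
  set z : W → ℝ := fun v => Complex.abs (x v) with hz
  have hz0 : ∀ w, 0 ≤ z w := fun w => AbsoluteValue.nonneg _ _
  have hzpow : ∀ w, z w * z w ^ (k - 1) = z w ^ k := by
    intro w
    rw [← pow_succ']
    congr 1
    omega
  have hsum : Complex.abs lam * Nq k z ≤ phi k E c z := by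
    unfold Nq phi
    have h1 : ∀ w, Complex.abs lam * z w ^ k ≤ c w * z w ^ k + z w * Rq E z w := by
      intro w
      have := mul_le_mul_of_nonneg_left (hpt w) (hz0 w)
      calc Complex.abs lam * z w ^ k = z w * (Complex.abs lam * z w ^ (k-1)) := by
            rw [← hzpow w]; ring
        _ ≤ z w * (c w * z w ^ (k-1) + Rq E z w) := this
        _ = c w * (z w * z w ^ (k-1)) + z w * Rq E z w := by ring
        _ = c w * z w ^ k + z w * Rq E z w := by rw [hzpow w]
    calc Complex.abs lam * ∑ w, z w ^ k = ∑ w, Complex.abs lam * z w ^ k := by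
          rw [Finset.mul_sum]
      _ ≤ ∑ w, (c w * z w ^ k + z w * Rq E z w) := Finset.sum_le_sum fun w _ => h1 w
      _ = (∑ w, c w * z w ^ k) + ∑ w, z w * Rq E z w := Finset.sum_add_distrib
      _ = (∑ w, c w * z w ^ k) + k * Fq E z := by rw [double_count k E hunif z]
  have hNpos : 0 < Nq k z := by
    obtain ⟨w, hw⟩ := Function.ne_iff.mp hx
    have hzw : 0 < z w := by
      simp only [hz]
      have : x w ≠ 0 := by simpa using hw
      exact AbsoluteValue.pos _ this
    unfold Nq
    refine Finset.sum_pos' (fun v _ => pow_nonneg (hz0 v) k) ⟨w, Finset.mem_univ w, ?_⟩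
    positivity
  have := le_trans hsum (hbd z hz0)
  exact le_of_mul_le_mul_right (by linarith) hNpos

lemma csSup_eq_of_mem_ub (S : Set ℝ) (ρ : ℝ) (hmem : ρ ∈ S) (hub : ∀ r ∈ S, r ≤ ρ) :
    sSup S = ρ :=
  le_antisymm (csSup_le ⟨ρ, hmem⟩ hub) (le_csSup ⟨ρ, fun r hr => hub r hr⟩ hmem)

lemma isAdjEig_of_lag (k : ℕ) (E : Finset (Finset W)) [Nonempty W]
    (ρ : ℝ) (zs : W → ℝ) (hzs0 : ∀ w, 0 < zs w)
    (hlag : ∀ w, ρ * zs w ^ (k - 1) = Rq E zs w) : IsAdjEig k E (ρ : ℂ) := by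
  refine ⟨fun w => (zs w : ℂ), ?_, fun w => ?_⟩
  · intro h0
    obtain ⟨w⟩ := ‹Nonempty W›
    have := congrFun h0 w
    simp only [Pi.zero_apply, Complex.ofReal_eq_zero] at this
    exact (hzs0 w).ne' this
  · rw [← Rq_cast, ← hlag w]
    push_cast
    ring

lemma isSignlessEig_of_lag (k : ℕ) (E : Finset (Finset W)) [Nonempty W]
    (ρ : ℝ) (zs : W → ℝ) (hzs0 : ∀ w, 0 < zs w)
    (hlag : ∀ w, (ρ - (hypDegree E w : ℝ)) * zs w ^ (k - 1) = Rq E zs w) :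
    IsSignlessEig k E (ρ : ℂ) := by
  refine ⟨fun w => (zs w : ℂ), ?_, fun w => ?_⟩
  · intro h0
    obtain ⟨w⟩ := ‹Nonempty W›
    have := congrFun h0 w
    simp only [Pi.zero_apply, Complex.ofReal_eq_zero] at this
    exact (hzs0 w).ne' this
  · rw [← Rq_cast, ← hlag w]
    push_cast
    ring

lemma adjEig_le (k : ℕ) (hk : 2 ≤ k) (E : Finset (Finset W))
    (hunif : ∀ e ∈ E, e.card = k) (ρ : ℝ)
    (hbd : ∀ y : W → ℝ, (∀ w, 0 ≤ y w) → phi k E (fun _ => 0) y ≤ ρ * Nq k y)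
    (lam : ℂ) (hlam : IsAdjEig k E lam) : Complex.abs lam ≤ ρ := by
  obtain ⟨x, hx, heq⟩ := hlam
  refine eig_bound k hk E (fun _ => 0) ρ hbd hunif lam x hx fun w => ?_
  have h1 : Complex.abs lam * Complex.abs (x w) ^ (k - 1)
      = Complex.abs (lam * x w ^ (k - 1)) := by
    rw [map_mul, map_pow]
  rw [h1, heq w, zero_mul, zero_add]
  exact abs_sum_prod_le E x w

lemma lapEig_le (k : ℕ) (hk : 2 ≤ k) (E : Finset (Finset W))
    (hunif : ∀ e ∈ E, e.card = k) (ρ : ℝ)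
    (hbd : ∀ y : W → ℝ, (∀ w, 0 ≤ y w) →
      phi k E (fun w => (hypDegree E w : ℝ)) y ≤ ρ * Nq k y)
    (lam : ℂ) (hlam : IsLapEig k E lam) : Complex.abs lam ≤ ρ := by
  obtain ⟨x, hx, heq⟩ := hlam
  refine eig_bound k hk E (fun w => (hypDegree E w : ℝ)) ρ hbd hunif lam x hx fun w => ?_
  have h1 : lam * x w ^ (k - 1)
      = (hypDegree E w : ℂ) * x w ^ (k - 1)
        - ∑ e ∈ E.filter (fun e => w ∈ e), ∏ p ∈ e.erase w, x p := by
    rw [← heq w]; ring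
  calc Complex.abs lam * Complex.abs (x w) ^ (k - 1)
      = Complex.abs (lam * x w ^ (k - 1)) := by rw [map_mul, map_pow]
    _ ≤ Complex.abs ((hypDegree E w : ℂ) * x w ^ (k - 1))
        + Complex.abs (∑ e ∈ E.filter (fun e => w ∈ e), ∏ p ∈ e.erase w, x p) := by
        rw [h1]; exact AbsoluteValue.sub_le_add _ _ _
    _ ≤ (hypDegree E w : ℝ) * Complex.abs (x w) ^ (k - 1)
        + Rq E (fun v => Complex.abs (x v)) w := by
        gcongr
        · rw [map_mul, map_pow]
          apply le_of_eq
          congr 1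
          simp [Complex.abs_natCast]
        · exact abs_sum_prod_le E x w

lemma signlessEig_le (k : ℕ) (hk : 2 ≤ k) (E : Finset (Finset W))
    (hunif : ∀ e ∈ E, e.card = k) (ρ : ℝ)
    (hbd : ∀ y : W → ℝ, (∀ w, 0 ≤ y w) →
      phi k E (fun w => (hypDegree E w : ℝ)) y ≤ ρ * Nq k y)
    (lam : ℂ) (hlam : IsSignlessEig k E lam) : Complex.abs lam ≤ ρ := by
  obtain ⟨x, hx, heq⟩ := hlam
  refine eig_bound k hk E (fun w => (hypDegree E w : ℝ)) ρ hbd hunif lam x hx fun w => ?_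
  have h1 : lam * x w ^ (k - 1)
      = (hypDegree E w : ℂ) * x w ^ (k - 1)
        + ∑ e ∈ E.filter (fun e => w ∈ e), ∏ p ∈ e.erase w, x p := by
    rw [← heq w]; ring
  calc Complex.abs lam * Complex.abs (x w) ^ (k - 1)
      = Complex.abs (lam * x w ^ (k - 1)) := by rw [map_mul, map_pow]
    _ ≤ Complex.abs ((hypDegree E w : ℂ) * x w ^ (k - 1))
        + Complex.abs (∑ e ∈ E.filter (fun e => w ∈ e), ∏ p ∈ e.erase w, x p) := by
        rw [h1]; exact AbsoluteValue.add_le _ _ _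
    _ ≤ (hypDegree E w : ℝ) * Complex.abs (x w) ^ (k - 1)
        + Rq E (fun v => Complex.abs (x v)) w := by
        gcongr
        · rw [map_mul, map_pow]
          apply le_of_eq
          congr 1
          simp [Complex.abs_natCast]
        · exact abs_sum_prod_le E x w

def EdgeRel (k : ℕ) (E : Finset (Finset W)) (γ : W → ℂ) : Prop :=
  ∀ e ∈ E, ∀ w ∈ e, ∏ p ∈ e.erase w, γ p = -(γ w ^ (k - 1))

lemma prod_tuple_erase (k : ℕ) (hk : 2 ≤ k) (t : Fin k → W)
    (ht : Function.Injective t) (γ : W → ℂ) :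
    ∏ i ∈ Finset.univ.erase (⟨0, Nat.lt_of_lt_of_le Nat.two_pos hk⟩ : Fin k), γ (t i)
      = ∏ p ∈ (Finset.image t Finset.univ).erase (t ⟨0, Nat.lt_of_lt_of_le Nat.two_pos hk⟩), γ p := by
  rw [← Finset.image_erase ht, Finset.prod_image (fun a _ b _ h => ht h)]

lemma exists_edge_tuple (k : ℕ) (hk : 2 ≤ k) {e : Finset W} (hek : e.card = k)
    {w : W} (hw : w ∈ e) :
    ∃ t : Fin k → W, Function.Injective t ∧ Finset.image t Finset.univ = e ∧
      t ⟨0, Nat.lt_of_lt_of_le Nat.two_pos hk⟩ = w ∧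
      (∀ γ : W → ℂ, ∏ i ∈ Finset.univ.erase (⟨0, Nat.lt_of_lt_of_le Nat.two_pos hk⟩ : Fin k), γ (t i)
        = ∏ p ∈ e.erase w, γ p) := by
  obtain ⟨m, rfl⟩ : ∃ m, k = m + 1 := ⟨k - 1, by omega⟩
  have hcard' : Fintype.card {x // x ∈ e.erase w} = m := by
    rw [Fintype.card_coe, Finset.card_erase_of_mem hw, hek]
    omega
  set g : Fin m ≃ {x // x ∈ e.erase w} := (Fintype.equivFinOfCardEq hcard').symm with hg
  set t : Fin (m + 1) → W := Fin.cons w (fun j => ((g j : {x // x ∈ e.erase w}) : W))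
    with htdef
  have hzero : (⟨0, by omega⟩ : Fin (m + 1)) = 0 := by
    apply Fin.ext
    simp
  have ht0 : t ⟨0, by omega⟩ = w := by
    rw [hzero, htdef, Fin.cons_zero]
  have htail : ∀ j : Fin m, t j.succ = ((g j : {x // x ∈ e.erase w}) : W) := by
    intro j
    rw [htdef, Fin.cons_succ]
  have htmem : ∀ j : Fin m, ((g j : {x // x ∈ e.erase w}) : W) ∈ e.erase w :=
    fun j => (g j).2
  have hinj : Function.Injective t := by
    intro i1 i2 h12
    obtain rfl | ⟨j1, rfl⟩ := Fin.eq_zero_or_eq_succ i1 <;>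
      obtain rfl | ⟨j2, rfl⟩ := Fin.eq_zero_or_eq_succ i2
    · rfl
    · exfalso
      rw [htdef] at h12
      simp only [Fin.cons_zero, Fin.cons_succ] at h12
      exact Finset.ne_of_mem_erase (htmem j2) h12.symm
    · exfalso
      rw [htdef] at h12
      simp only [Fin.cons_zero, Fin.cons_succ] at h12
      exact Finset.ne_of_mem_erase (htmem j1) h12
    · rw [htdef] at h12
      simp only [Fin.cons_succ] at h12
      rw [g.injective (Subtype.ext h12)]
  have himage : Finset.image t Finset.univ = e := by
    apply Finset.eq_of_subset_of_card_le
    · intro v hv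
      obtain ⟨i, _, rfl⟩ := Finset.mem_image.mp hv
      obtain rfl | ⟨j, rfl⟩ := Fin.eq_zero_or_eq_succ i
      · rw [htdef, Fin.cons_zero]
        exact hw
      · rw [htail j]
        exact Finset.mem_of_mem_erase (htmem j)
    · rw [Finset.card_image_of_injective _ hinj, hek]
      simp
  refine ⟨t, hinj, himage, ht0, fun γ => ?_⟩
  rw [prod_tuple_erase (m+1) hk t hinj γ, himage, ht0]

lemma diagEnt_const (k : ℕ) (hk : 2 ≤ k) (E : Finset (Finset W))
    {t : Fin k → W} {w : W} (hconst : ∀ i, t i = w) :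
    diagEnt k E t = (hypDegree E w : ℂ) := by
  have hex : ∃ v : W, ∀ i, t i = v := ⟨w, hconst⟩
  rw [diagEnt, dif_pos hex]
  have h1 : t ⟨0, by omega⟩ = hex.choose := hex.choose_spec ⟨0, by omega⟩
  have h2 : t ⟨0, by omega⟩ = w := hconst _
  rw [← h1, h2]

lemma not_inj_of_const (k : ℕ) (hk : 2 ≤ k) {t : Fin k → W} {w : W}
    (hconst : ∀ i, t i = w) : ¬ Function.Injective t := by
  intro hinj
  have h01 : (⟨0, by omega⟩ : Fin k) = ⟨1, by omega⟩ := by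
    apply hinj
    rw [hconst, hconst]
  simp [Fin.ext_iff] at h01

lemma nonconst_of_inj (k : ℕ) (hk : 2 ≤ k) {t : Fin k → W}
    (hinj : Function.Injective t) : ¬ ∃ w : W, ∀ i, t i = w := by
  rintro ⟨w, hconst⟩
  exact not_inj_of_const k hk hconst hinj

lemma core4 (k : ℕ) (hk : 2 ≤ k) (E : Finset (Finset W))
    (hunif : ∀ e ∈ E, e.card = k) (γ : W → ℂ) (hγ0 : ∀ w, γ w ≠ 0)
    (hrel : EdgeRel k E γ) (t : Fin k → W) :
    -(adjEnt k E t) =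
      (γ (t ⟨0, Nat.lt_of_lt_of_le Nat.two_pos hk⟩))⁻¹ ^ (k - 1) *
        (adjEnt k E t * ∏ i ∈ Finset.univ.erase (⟨0, Nat.lt_of_lt_of_le Nat.two_pos hk⟩ : Fin k), γ (t i)) := by
  by_cases hc : Function.Injective t ∧ Finset.image t Finset.univ ∈ E
  · rw [adjEnt, if_pos hc]
    rw [prod_tuple_erase k hk t hc.1 γ]
    have hw : t ⟨0, by omega⟩ ∈ Finset.image t Finset.univ :=
      Finset.mem_image_of_mem t (Finset.mem_univ _)
    rw [hrel _ hc.2 _ hw]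
    have h0 : γ (t ⟨0, by omega⟩) ≠ 0 := hγ0 _
    field_simp
    rw [div_pow, one_pow, one_div_mul_cancel (pow_ne_zero _ h0)]
  · rw [adjEnt, if_neg hc]
    ring

lemma cond2_of_edgeRel (k : ℕ) (hk : 2 ≤ k) (E : Finset (Finset W))
    (hunif : ∀ e ∈ E, e.card = k) (γ : W → ℂ) (hγ0 : ∀ w, γ w ≠ 0)
    (hrel : EdgeRel k E γ) (t : Fin k → W) :
    diagEnt k E t - adjEnt k E t =
      (γ (t ⟨0, Nat.lt_of_lt_of_le Nat.two_pos hk⟩))⁻¹ ^ (k - 1) *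
        ((diagEnt k E t + adjEnt k E t) *
          ∏ i ∈ Finset.univ.erase (⟨0, Nat.lt_of_lt_of_le Nat.two_pos hk⟩ : Fin k), γ (t i)) := by
  by_cases hex : ∃ w : W, ∀ i, t i = w
  · obtain ⟨w, hconst⟩ := hex
    rw [diagEnt_const k hk E hconst]
    have hadj : adjEnt k E t = 0 := by
      rw [adjEnt, if_neg]
      rintro ⟨hinj, -⟩
      exact not_inj_of_const k hk hconst hinj
    have hprod : ∏ i ∈ Finset.univ.erase (⟨0, by omega⟩ : Fin k), γ (t i)
        = γ w ^ (k - 1) := by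
      have h1 : ∀ i ∈ Finset.univ.erase (⟨0, by omega⟩ : Fin k), γ (t i) = γ w :=
        fun i _ => by rw [hconst i]
      rw [Finset.prod_congr rfl h1, Finset.prod_const, Finset.card_erase_of_mem
        (Finset.mem_univ _), Finset.card_univ, Fintype.card_fin]
    rw [hadj, hprod, hconst]
    have h0 : γ w ≠ 0 := hγ0 w
    field_simp
    rw [sub_zero, add_zero, one_div, inv_pow, mul_comm _ (γ w ^ (k - 1)), ← mul_assoc,
      mul_inv_cancel₀ (pow_ne_zero _ h0), one_mul]
  · rw [diagEnt, dif_neg hex]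
    have := core4 k hk E hunif γ hγ0 hrel t
    rw [zero_sub, zero_add, this]

lemma extract_prod (c P : ℂ) (g : ℂ) (hc : c ≠ 0) (hg : g ≠ 0) (n : ℕ)
    (heq : -c = g⁻¹ ^ n * (c * P)) : P = -(g ^ n) := by
  have hgn : g ^ n ≠ 0 := pow_ne_zero n hg
  have h3 : -c * g ^ n = c * P := by
    rw [heq, inv_pow]
    field_simp
  apply mul_left_cancel₀ hc
  rw [← h3]
  ring

lemma edgeRel_of_cond4 (k : ℕ) (hk : 2 ≤ k) (E : Finset (Finset W))
    (hunif : ∀ e ∈ E, e.card = k) (γ : W → ℂ) (hγ0 : ∀ w, γ w ≠ 0)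
    (hcond : ∀ t : Fin k → W,
      -(adjEnt k E t) =
        (γ (t ⟨0, Nat.lt_of_lt_of_le Nat.two_pos hk⟩))⁻¹ ^ (k - 1) *
          (adjEnt k E t *
            ∏ i ∈ Finset.univ.erase (⟨0, Nat.lt_of_lt_of_le Nat.two_pos hk⟩ : Fin k), γ (t i))) :
    EdgeRel k E γ := by
  intro e he w hw
  obtain ⟨t, hinj, himg, ht0, hprod⟩ := exists_edge_tuple k hk (hunif e he) hw
  have h1 := hcond t
  rw [adjEnt, if_pos ⟨hinj, himg ▸ he⟩, hprod γ, ht0] at h1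
  refine extract_prod _ _ _ ?_ (hγ0 w) _ h1
  simp [Nat.factorial_ne_zero]

lemma edgeRel_of_cond2 (k : ℕ) (hk : 2 ≤ k) (E : Finset (Finset W))
    (hunif : ∀ e ∈ E, e.card = k) (γ : W → ℂ) (hγ0 : ∀ w, γ w ≠ 0)
    (hcond : ∀ t : Fin k → W,
      diagEnt k E t - adjEnt k E t =
        (γ (t ⟨0, Nat.lt_of_lt_of_le Nat.two_pos hk⟩))⁻¹ ^ (k - 1) *
          ((diagEnt k E t + adjEnt k E t) *
            ∏ i ∈ Finset.univ.erase (⟨0, Nat.lt_of_lt_of_le Nat.two_pos hk⟩ : Fin k), γ (t i))) :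
    EdgeRel k E γ := by
  intro e he w hw
  obtain ⟨t, hinj, himg, ht0, hprod⟩ := exists_edge_tuple k hk (hunif e he) hw
  have h1 := hcond t
  rw [adjEnt, if_pos ⟨hinj, himg ▸ he⟩, hprod γ, ht0,
    diagEnt, dif_neg (nonconst_of_inj k hk hinj), zero_sub, zero_add] at h1
  refine extract_prod _ _ _ ?_ (hγ0 w) _ h1
  simp [Nat.factorial_ne_zero]

lemma edgeRel_inv (k : ℕ) (E : Finset (Finset W)) (γ : W → ℂ) (hγ0 : ∀ w, γ w ≠ 0)
    (hrel : EdgeRel k E γ) : EdgeRel k E (fun w => (γ w)⁻¹) := by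
  intro e he w hw
  have h1 := hrel e he w hw
  show ∏ p ∈ e.erase w, (γ p)⁻¹ = -((γ w)⁻¹ ^ (k - 1))
  rw [Finset.prod_inv_distrib, h1, inv_neg, inv_pow]

lemma prod_mul_split (e : Finset W) (w : W) (γ x : W → ℂ) :
    ∏ p ∈ e.erase w, (γ p * x p) = (∏ p ∈ e.erase w, γ p) * ∏ p ∈ e.erase w, x p :=
  Finset.prod_mul_distrib

lemma real_of_re_eq_abs (z : ℂ) (h : z.re = Complex.abs z) : z = (Complex.abs z : ℂ) := by
  have h1 : Complex.abs z ^ 2 = z.re ^ 2 + z.im ^ 2 := by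
    rw [Complex.sq_abs, Complex.normSq_apply]
    ring
  have h2 : z.im ^ 2 = 0 := by
    rw [h] at h1
    nlinarith
  have h3 : z.im = 0 := by
    nlinarith
  apply Complex.ext
  · rw [h, Complex.ofReal_re]
  · rw [h3, Complex.ofReal_im]

lemma align {ι : Type*} (s : Finset ι) (f : ι → ℂ)
    (h : Complex.abs (∑ j ∈ s, f j) = ∑ j ∈ s, Complex.abs (f j)) :
    ∀ i ∈ s, f i * (Complex.abs (∑ j ∈ s, f j) : ℂ)
      = (∑ j ∈ s, f j) * (Complex.abs (f i) : ℂ) := by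
  intro i his
  set T : ℂ := ∑ j ∈ s, f j with hT
  rcases eq_or_ne (Complex.abs T) 0 with hT0 | hT0
  · have hfz : ∀ j ∈ s, Complex.abs (f j) = 0 := by
      intro j hj
      have hsum0 : ∑ j ∈ s, Complex.abs (f j) = 0 := by rw [← h, hT0]
      have := (Finset.sum_eq_zero_iff_of_nonneg
        (fun j _ => AbsoluteValue.nonneg Complex.abs (f j))).mp hsum0
      exact this j hj
    have hfi : f i = 0 := by
      have := hfz i his
      exact (AbsoluteValue.eq_zero _).mp this
    rw [hfi, hT0]
    simp
  -- main case
  have key : ∀ j ∈ s, ((starRingEnd ℂ) T * f j).re = Complex.abs T * Complex.abs (f j) := by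
    have hsum1 : ∑ j ∈ s, ((starRingEnd ℂ) T * f j).re
        = ∑ j ∈ s, Complex.abs T * Complex.abs (f j) := by
      have e1 : ∑ j ∈ s, ((starRingEnd ℂ) T * f j).re
          = ((starRingEnd ℂ) T * T).re := by
        rw [← Complex.re_sum]
        congr 1
        rw [← Finset.mul_sum]
      have e2 : ((starRingEnd ℂ) T * T).re = Complex.abs T ^ 2 := by
        rw [mul_comm, Complex.mul_conj]
        rw [Complex.ofReal_re]  -- normSq
        rw [← Complex.sq_abs]
      rw [e1, e2, ← Finset.mul_sum, ← h]
      ring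
    have hle : ∀ j ∈ s, ((starRingEnd ℂ) T * f j).re
        ≤ Complex.abs T * Complex.abs (f j) := by
      intro j hj
      calc ((starRingEnd ℂ) T * f j).re ≤ Complex.abs ((starRingEnd ℂ) T * f j) :=
            Complex.re_le_abs _
        _ = Complex.abs T * Complex.abs (f j) := by
            rw [map_mul, Complex.abs_conj]
    intro j hj
    by_contra hne
    have hlt : ((starRingEnd ℂ) T * f j).re < Complex.abs T * Complex.abs (f j) :=
      lt_of_le_of_ne (hle j hj) hne
    have : ∑ j ∈ s, ((starRingEnd ℂ) T * f j).re
        < ∑ j ∈ s, Complex.abs T * Complex.abs (f j) :=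
      Finset.sum_lt_sum (fun j hj => hle j hj) ⟨j, hj, hlt⟩
    rw [hsum1] at this
    exact lt_irrefl _ this
  have hzi := key i his
  set z : ℂ := (starRingEnd ℂ) T * f i with hz
  have habsz : Complex.abs z = Complex.abs T * Complex.abs (f i) := by
    rw [hz, map_mul, Complex.abs_conj]
  have hzre : z.re = Complex.abs z := by rw [habsz]; exact hzi
  have hzeq : z = (Complex.abs z : ℂ) := real_of_re_eq_abs z hzre
  -- multiply by T
  have h5 : T * z = T * (Complex.abs z : ℂ) := by conv_lhs => rw [hzeq]
  have h6 : T * ((starRingEnd ℂ) T) = ((Complex.abs T ^ 2 : ℝ) : ℂ) := by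
    rw [Complex.mul_conj, ← Complex.sq_abs]
  have h7 : ((Complex.abs T ^ 2 : ℝ) : ℂ) * f i
      = T * ((Complex.abs T * Complex.abs (f i) : ℝ) : ℂ) := by
    calc ((Complex.abs T ^ 2 : ℝ) : ℂ) * f i = T * ((starRingEnd ℂ) T) * f i := by
          rw [h6]
      _ = T * z := by rw [hz]; ring
      _ = T * (Complex.abs z : ℂ) := h5
      _ = T * ((Complex.abs T * Complex.abs (f i) : ℝ) : ℂ) := by rw [habsz]
  have h8 : (Complex.abs T : ℂ) * (f i * (Complex.abs T : ℂ) - T * (Complex.abs (f i) : ℂ))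
      = 0 := by
    push_cast at h7 ⊢
    ring_nf
    ring_nf at h7
    linear_combination h7
  have h9 : (Complex.abs T : ℂ) ≠ 0 := by
    simpa using hT0
  have h10 := mul_eq_zero.mp h8
  rcases h10 with h10 | h10
  · exact absurd h10 h9
  · linear_combination h10

lemma align2 (a b : ℂ) (h : Complex.abs (a + b) = Complex.abs a + Complex.abs b) :
    a * (Complex.abs (a + b) : ℂ) = (a + b) * (Complex.abs a : ℂ)
      ∧ b * (Complex.abs (a + b) : ℂ) = (a + b) * (Complex.abs b : ℂ) := by
  set f : Bool → ℂ := fun i => if i then a else b with hf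
  have hsum : ∑ j ∈ Finset.univ, f j = a + b := by
    rw [Fintype.sum_bool]
    simp [hf]
  have habs : Complex.abs (∑ j ∈ Finset.univ, f j) = ∑ j ∈ Finset.univ, Complex.abs (f j) := by
    rw [hsum]
    rw [h]
    rw [Fintype.sum_bool]
    simp [hf]
  have h1 := align Finset.univ f habs true (Finset.mem_univ _)
  have h2 := align Finset.univ f habs false (Finset.mem_univ _)
  rw [hsum] at h1 h2
  simp only [hf, if_true, if_false] at h1 h2
  exact ⟨h1, h2⟩

lemma sum_transform (k : ℕ) (E : Finset (Finset W)) (γ : W → ℂ)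
    (hrel : EdgeRel k E γ) (x : W → ℂ) (w : W) :
    ∑ e ∈ E.filter (fun e => w ∈ e), ∏ p ∈ e.erase w, (γ p * x p)
      = -(γ w ^ (k - 1)) * ∑ e ∈ E.filter (fun e => w ∈ e), ∏ p ∈ e.erase w, x p := by
  rw [Finset.mul_sum]
  refine Finset.sum_congr rfl fun e he => ?_
  obtain ⟨heE, hwe⟩ := Finset.mem_filter.mp he
  rw [Finset.prod_mul_distrib, hrel e heE w hwe]

lemma adj_transform (k : ℕ) (E : Finset (Finset W)) (γ : W → ℂ) (hγ0 : ∀ w, γ w ≠ 0)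
    (hrel : EdgeRel k E γ) (lam : ℂ) (h : IsAdjEig k E lam) : IsAdjEig k E (-lam) := by
  obtain ⟨x, hx, heq⟩ := h
  refine ⟨fun w => γ w * x w, ?_, fun w => ?_⟩
  · obtain ⟨w, hw⟩ := Function.ne_iff.mp hx
    refine Function.ne_iff.mpr ⟨w, ?_⟩
    simp only [Pi.zero_apply] at hw ⊢
    exact mul_ne_zero (hγ0 w) hw
  · rw [sum_transform k E γ hrel x w, ← heq w, mul_pow]
    ring

lemma lap_signless_transform (k : ℕ) (E : Finset (Finset W)) (γ : W → ℂ)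
    (hγ0 : ∀ w, γ w ≠ 0) (hrel : EdgeRel k E γ) (lam : ℂ) (h : IsLapEig k E lam) :
    IsSignlessEig k E lam := by
  obtain ⟨x, hx, heq⟩ := h
  refine ⟨fun w => γ w * x w, ?_, fun w => ?_⟩
  · obtain ⟨w, hw⟩ := Function.ne_iff.mp hx
    refine Function.ne_iff.mpr ⟨w, ?_⟩
    simp only [Pi.zero_apply] at hw ⊢
    exact mul_ne_zero (hγ0 w) hw
  · rw [sum_transform k E γ hrel x w, ← heq w, mul_pow]
    ring

lemma signless_lap_transform (k : ℕ) (E : Finset (Finset W)) (γ : W → ℂ)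
    (hγ0 : ∀ w, γ w ≠ 0) (hrel : EdgeRel k E γ) (lam : ℂ) (h : IsSignlessEig k E lam) :
    IsLapEig k E lam := by
  obtain ⟨x, hx, heq⟩ := h
  have hrel' := edgeRel_inv k E γ hγ0 hrel
  refine ⟨fun w => (γ w)⁻¹ * x w, ?_, fun w => ?_⟩
  · obtain ⟨w, hw⟩ := Function.ne_iff.mp hx
    refine Function.ne_iff.mpr ⟨w, ?_⟩
    simp only [Pi.zero_apply] at hw ⊢
    exact mul_ne_zero (inv_ne_zero (hγ0 w)) hw
  · rw [sum_transform k E (fun w => (γ w)⁻¹) hrel' x w, ← heq w, mul_pow]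
    ring

lemma degree_pos (k : ℕ) (hk : 2 ≤ k) (E : Finset (Finset W))
    (hunif : ∀ e ∈ E, e.card = k) (hedge : E.Nonempty)
    (hconn : ∀ a b : W, Relation.ReflTransGen (fun p q => ∃ e ∈ E, p ∈ e ∧ q ∈ e) a b)
    (w : W) : 0 < hypDegree E w := by
  obtain ⟨e1, he1⟩ := hedge
  obtain ⟨v, hv⟩ := Finset.card_pos.mp (by rw [hunif e1 he1]; omega)
  have hex : ∃ e ∈ E, w ∈ e := by
    by_cases hwe : w ∈ e1
    · exact ⟨e1, he1, hwe⟩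
    · have h := hconn w v
      rcases h.cases_head with heq | ⟨c, ⟨e, he, hwme, _⟩, _⟩
      · exact absurd (heq ▸ hv) hwe
      · exact ⟨e, he, hwme⟩
  obtain ⟨e, he, hwe⟩ := hex
  unfold hypDegree
  exact Finset.card_pos.mpr ⟨e, Finset.mem_filter.mpr ⟨he, hwe⟩⟩

lemma phi_zero_c (k : ℕ) (E : Finset (Finset W)) (z : W → ℝ) :
    phi k E (fun _ => 0) z = k * Fq E z := by
  unfold phi
  simp

lemma zabs_props (y : W → ℂ) (hy : y ≠ 0) :
    (∀ w, 0 ≤ Complex.abs (y w)) ∧ (fun v => Complex.abs (y v)) ≠ 0 := by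
  refine ⟨fun w => AbsoluteValue.nonneg _ _, ?_⟩
  obtain ⟨w, hw⟩ := Function.ne_iff.mp hy
  refine Function.ne_iff.mpr ⟨w, ?_⟩
  simp only [Pi.zero_apply] at hw ⊢
  exact (AbsoluteValue.ne_zero _ hw)

lemma pointwise_slack (k : ℕ) (hk : 2 ≤ k) (E : Finset (Finset W))
    (hunif : ∀ e ∈ E, e.card = k) (ρ : ℝ) (c : W → ℝ) (z : W → ℝ)
    (hz0 : ∀ w, 0 ≤ z w) (hzpos : ∀ w, 0 < z w)
    (hpt : ∀ w, ρ * z w ^ (k - 1) ≤ c w * z w ^ (k - 1) + Rq E z w)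
    (heq2 : phi k E c z = ρ * Nq k z) :
    ∀ w, ρ * z w ^ (k - 1) = c w * z w ^ (k - 1) + Rq E z w := by
  have hsum : ∑ w, z w * (c w * z w ^ (k - 1) + Rq E z w - ρ * z w ^ (k - 1)) = 0 := by
    have hzz : ∀ w, z w * z w ^ (k - 1) = z w ^ k := by
      intro w
      rw [← pow_succ']
      congr 1
      omega
    have expand : ∑ w, z w * (c w * z w ^ (k-1) + Rq E z w - ρ * z w ^ (k-1))
        = (∑ w, c w * z w ^ k) + (∑ w, z w * Rq E z w) - ρ * (∑ w, z w ^ k) := by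
      rw [Finset.mul_sum, ← Finset.sum_add_distrib, ← Finset.sum_sub_distrib]
      refine Finset.sum_congr rfl fun w _ => ?_
      rw [← hzz w]
      ring
    rw [expand, double_count k E hunif z]
    have : phi k E c z = (∑ w, c w * z w ^ k) + k * Fq E z := rfl
    rw [← this, heq2]
    unfold Nq
    ring
  have hterm : ∀ w ∈ Finset.univ,
      z w * (c w * z w ^ (k-1) + Rq E z w - ρ * z w ^ (k-1)) = 0 := by
    refine (Finset.sum_eq_zero_iff_of_nonneg fun w _ => ?_).mp hsum
    have h1 := hpt w
    have h2 := (hzpos w).le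
    nlinarith
  intro w
  have h3 := hterm w (Finset.mem_univ w)
  rcases mul_eq_zero.mp h3 with h4 | h4
  · exact absurd h4 (hzpos w).ne'
  · linarith

lemma Rq_pos (k : ℕ) (E : Finset (Finset W)) (z : W → ℝ) (hzpos : ∀ w, 0 < z w)
    (w : W) (hd : 0 < hypDegree E w) : 0 < Rq E z w := by
  unfold Rq
  refine Finset.sum_pos (fun e he => Finset.prod_pos fun p _ => hzpos p) ?_
  rw [← Finset.card_pos]
  exact hd

lemma gamma_unit (y : W → ℂ) (z : W → ℝ) (hz : ∀ v, z v = Complex.abs (y v))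
    (hzpos : ∀ v, 0 < z v) :
    ∀ v, Complex.abs ((fun v => y v / (z v : ℂ)) v) = 1 := by
  intro v
  have hpos : 0 < Complex.abs (y v) := by rw [← hz v]; exact hzpos v
  simp only [map_div₀, Complex.abs_ofReal]
  rw [_root_.abs_of_pos (hzpos v), hz v, div_self hpos.ne']

lemma eq_case_adj (k : ℕ) (hk : 2 ≤ k) (E : Finset (Finset W))
    (hunif : ∀ e ∈ E, e.card = k) (ρ : ℝ) (hρ : 0 < ρ)
    (hbd : ∀ y : W → ℝ, (∀ w, 0 ≤ y w) → phi k E (fun _ => 0) y ≤ ρ * Nq k y)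
    (hmaxpos : ∀ y : W → ℝ, (∀ w, 0 ≤ y w) → y ≠ 0 →
      phi k E (fun _ => 0) y = ρ * Nq k y → ∀ w, 0 < y w)
    (y : W → ℂ) (hy : y ≠ 0)
    (heq : ∀ w, ((-ρ : ℝ) : ℂ) * y w ^ (k - 1)
      = ∑ e ∈ E.filter (fun e => w ∈ e), ∏ p ∈ e.erase w, y p) :
    ∃ γ : W → ℂ, (∀ w, Complex.abs (γ w) = 1) ∧ EdgeRel k E γ := by
  set z : W → ℝ := fun v => Complex.abs (y v) with hzdef
  obtain ⟨hz0, hzne⟩ := zabs_props y hy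
  have habslam : Complex.abs ((-ρ : ℝ) : ℂ) = ρ := by
    rw [Complex.abs_ofReal, abs_neg, abs_of_pos hρ]
  have habsT : ∀ w, Complex.abs (((-ρ : ℝ) : ℂ) * y w ^ (k - 1)) = ρ * z w ^ (k - 1) := by
    intro w
    rw [map_mul, map_pow, habslam]
  have hpt : ∀ w, ρ * z w ^ (k - 1) ≤ Rq E z w := by
    intro w
    rw [← habsT w, heq w]
    exact abs_sum_prod_le E y w
  have heq2 : phi k E (fun _ => 0) z = ρ * Nq k z := by
    refine le_antisymm (hbd z hz0) ?_
    rw [phi_zero_c]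
    have h1 : ρ * Nq k z ≤ ∑ w, z w * Rq E z w := by
      unfold Nq
      rw [Finset.mul_sum]
      refine Finset.sum_le_sum fun w _ => ?_
      have hzz : z w ^ k = z w * z w ^ (k - 1) := by
        rw [← pow_succ']
        congr 1
        omega
      rw [hzz]
      calc ρ * (z w * z w ^ (k-1)) = z w * (ρ * z w ^ (k-1)) := by ring
        _ ≤ z w * Rq E z w := mul_le_mul_of_nonneg_left (hpt w) (hz0 w)
    rw [double_count k E hunif z] at h1
    exact h1
  have hzpos : ∀ w, 0 < z w := hmaxpos z hz0 hzne heq2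
  have hptEq : ∀ w, ρ * z w ^ (k - 1) = Rq E z w := by
    have := pointwise_slack k hk E hunif ρ (fun _ => 0) z hz0 hzpos
      (fun w => by simpa using hpt w) heq2
    intro w
    have h := this w
    simpa using h
  set γ : W → ℂ := fun v => y v / (z v : ℂ) with hγdef
  have hγ1 : ∀ v, Complex.abs (γ v) = 1 := gamma_unit y z (fun v => rfl) hzpos
  have hyγ : ∀ v, y v = γ v * (z v : ℂ) := by
    intro v
    rw [hγdef]
    have : (z v : ℂ) ≠ 0 := by
      simp only [ne_eq, Complex.ofReal_eq_zero]
      exact (hzpos v).ne'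
    field_simp
  refine ⟨γ, hγ1, ?_⟩
  intro e he w hw
  -- alignment
  have halignAll := align (E.filter (fun e => w ∈ e)) (fun e => ∏ p ∈ e.erase w, y p) ?abs
  case abs =>
    rw [← heq w, habsT w, hptEq w]
    unfold Rq
    refine Finset.sum_congr rfl fun e' he' => ?_
    rw [map_prod]
  have halign := halignAll e (Finset.mem_filter.mpr ⟨he, hw⟩)
  rw [← heq w, habsT w] at halign
  have habsprod : Complex.abs (∏ p ∈ e.erase w, y p) = ∏ p ∈ e.erase w, z p := by
    rw [map_prod]
  rw [habsprod] at halign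
  -- substitute y = γ z
  have hprody : ∏ p ∈ e.erase w, y p
      = (∏ p ∈ e.erase w, γ p) * ∏ p ∈ e.erase w, (z p : ℂ) := by
    rw [Finset.prod_congr rfl (fun p _ => hyγ p), Finset.prod_mul_distrib]
  have hZc : (∏ p ∈ e.erase w, (z p : ℂ)) ≠ 0 := by
    refine Finset.prod_ne_zero_iff.mpr fun p _ => ?_
    simp only [ne_eq, Complex.ofReal_eq_zero]
    exact (hzpos p).ne'
  have hzc : ((z w : ℂ)) ^ (k - 1) ≠ 0 := by
    refine pow_ne_zero _ ?_
    simp only [ne_eq, Complex.ofReal_eq_zero]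
    exact (hzpos w).ne'
  have hρc : (ρ : ℂ) ≠ 0 := by
    simp only [ne_eq, Complex.ofReal_eq_zero]
    exact hρ.ne'
  have hcast1 : ((ρ * z w ^ (k - 1) : ℝ) : ℂ) = (ρ : ℂ) * ((z w : ℂ)) ^ (k - 1) := by
    push_cast
    ring
  have hcast2 : ((∏ p ∈ e.erase w, z p : ℝ) : ℂ) = ∏ p ∈ e.erase w, (z p : ℂ) := by
    push_cast
    rfl
  rw [hcast1, hcast2, hprody, hyγ w] at halign
  -- halign : (∏γ * ∏zc) * (ρc * zc^(k-1)) = ((-ρ:ℝ):ℂ) * (γ w * zc) ^ (k-1) * ∏zc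
  have hfact : (ρ : ℂ) * ((z w : ℂ)) ^ (k - 1) * (∏ p ∈ e.erase w, (z p : ℂ)) ≠ 0 :=
    mul_ne_zero (mul_ne_zero hρc hzc) hZc
  apply mul_right_cancel₀ hfact
  have hnegcast : ((-ρ : ℝ) : ℂ) = -(ρ : ℂ) := by push_cast; ring
  rw [hnegcast, mul_pow] at halign
  calc (∏ p ∈ e.erase w, γ p) * ((ρ:ℂ) * ((z w : ℂ))^(k-1) * ∏ p ∈ e.erase w, (z p : ℂ))
      = (∏ p ∈ e.erase w, γ p) * (∏ p ∈ e.erase w, (z p : ℂ))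
        * ((ρ:ℂ) * ((z w : ℂ))^(k-1)) := by ring
    _ = -(ρ:ℂ) * (γ w ^ (k-1) * ((z w : ℂ))^(k-1)) * ∏ p ∈ e.erase w, (z p : ℂ) := halign
    _ = -(γ w ^ (k-1)) * ((ρ:ℂ) * ((z w : ℂ))^(k-1) * ∏ p ∈ e.erase w, (z p : ℂ)) := by
        ring

lemma eq_case_lap (k : ℕ) (hk : 2 ≤ k) (E : Finset (Finset W))
    (hunif : ∀ e ∈ E, e.card = k) (ρ : ℝ) (hρ : 0 < ρ)
    (hbd : ∀ y : W → ℝ, (∀ w, 0 ≤ y w) →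
      phi k E (fun w => (hypDegree E w : ℝ)) y ≤ ρ * Nq k y)
    (hmaxpos : ∀ y : W → ℝ, (∀ w, 0 ≤ y w) → y ≠ 0 →
      phi k E (fun w => (hypDegree E w : ℝ)) y = ρ * Nq k y → ∀ w, 0 < y w)
    (hdeg : ∀ w, 0 < hypDegree E w)
    (lam : ℂ) (hlamabs : Complex.abs lam = ρ)
    (y : W → ℂ) (hy : y ≠ 0)
    (heq : ∀ w, ((hypDegree E w : ℂ) - lam) * y w ^ (k - 1)
      = ∑ e ∈ E.filter (fun e => w ∈ e), ∏ p ∈ e.erase w, y p) :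
    ∃ γ : W → ℂ, (∀ w, Complex.abs (γ w) = 1) ∧ EdgeRel k E γ := by
  set dfun : W → ℝ := fun w => (hypDegree E w : ℝ) with hdfun
  set z : W → ℝ := fun v => Complex.abs (y v) with hzdef
  obtain ⟨hz0, hzne⟩ := zabs_props y hy
  have hTsum : ∀ w, lam * y w ^ (k - 1)
      = (hypDegree E w : ℂ) * y w ^ (k - 1)
        - ∑ e ∈ E.filter (fun e => w ∈ e), ∏ p ∈ e.erase w, y p := by
    intro w
    linear_combination (-1 : ℂ) * heq w
  have habsd : ∀ w, Complex.abs ((hypDegree E w : ℂ) * y w ^ (k - 1))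
      = dfun w * z w ^ (k - 1) := by
    intro w
    rw [map_mul, map_pow]
    congr 1
    simp [Complex.abs_natCast]
    rfl
  have habsT : ∀ w, Complex.abs (lam * y w ^ (k - 1)) = ρ * z w ^ (k - 1) := by
    intro w
    rw [map_mul, map_pow, hlamabs]
  have hpt : ∀ w, ρ * z w ^ (k - 1) ≤ dfun w * z w ^ (k - 1) + Rq E z w := by
    intro w
    rw [← habsT w]
    calc Complex.abs (lam * y w ^ (k - 1))
        ≤ Complex.abs ((hypDegree E w : ℂ) * y w ^ (k - 1))
          + Complex.abs (∑ e ∈ E.filter (fun e => w ∈ e), ∏ p ∈ e.erase w, y p) := by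
          rw [hTsum w]
          exact AbsoluteValue.sub_le_add _ _ _
      _ ≤ dfun w * z w ^ (k - 1) + Rq E z w := by
          rw [habsd w]
          gcongr
          exact abs_sum_prod_le E y w
  have heq2 : phi k E dfun z = ρ * Nq k z := by
    refine le_antisymm (hbd z hz0) ?_
    have hzz : ∀ w, z w ^ k = z w * z w ^ (k - 1) := by
      intro w
      rw [← pow_succ']
      congr 1
      omega
    have h1 : ρ * Nq k z ≤ ∑ w, z w * (dfun w * z w ^ (k - 1) + Rq E z w) := by
      unfold Nq
      rw [Finset.mul_sum]
      refine Finset.sum_le_sum fun w _ => ?_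
      rw [hzz w]
      calc ρ * (z w * z w ^ (k-1)) = z w * (ρ * z w ^ (k-1)) := by ring
        _ ≤ z w * (dfun w * z w ^ (k-1) + Rq E z w) :=
            mul_le_mul_of_nonneg_left (hpt w) (hz0 w)
    have h2 : ∑ w, z w * (dfun w * z w ^ (k - 1) + Rq E z w) = phi k E dfun z := by
      unfold phi
      rw [← double_count k E hunif z, ← Finset.sum_add_distrib]
      refine Finset.sum_congr rfl fun w _ => ?_
      rw [hzz w]
      ring
    rw [h2] at h1
    exact h1
  have hzpos : ∀ w, 0 < z w := hmaxpos z hz0 hzne heq2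
  have hptEq : ∀ w, ρ * z w ^ (k - 1) = dfun w * z w ^ (k - 1) + Rq E z w :=
    pointwise_slack k hk E hunif ρ dfun z hz0 hzpos hpt heq2
  set γ : W → ℂ := fun v => y v / (z v : ℂ) with hγdef
  have hγ1 : ∀ v, Complex.abs (γ v) = 1 := gamma_unit y z (fun v => rfl) hzpos
  have hyγ : ∀ v, y v = γ v * (z v : ℂ) := by
    intro v
    rw [hγdef]
    have : (z v : ℂ) ≠ 0 := by
      simp only [ne_eq, Complex.ofReal_eq_zero]
      exact (hzpos v).ne'
    field_simp
  refine ⟨γ, hγ1, ?_⟩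
  intro e he w hw
  set S : ℂ := ∑ e ∈ E.filter (fun e => w ∈ e), ∏ p ∈ e.erase w, y p with hS
  set a : ℂ := (hypDegree E w : ℂ) * y w ^ (k - 1) with ha
  set b : ℂ := -S with hb
  have hTval : lam * y w ^ (k - 1) = a + b := by
    rw [ha, hb, hTsum w]
    ring
  have habs_b_le : Complex.abs b ≤ Rq E z w := by
    rw [hb, map_neg_eq_map]
    exact abs_sum_prod_le E y w
  have habs_ab : Complex.abs (a + b) = Complex.abs a + Complex.abs b := by
    have e1 : Complex.abs (a + b) ≤ Complex.abs a + Complex.abs b :=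
      AbsoluteValue.add_le _ _ _
    have e2 : Complex.abs (a + b) = ρ * z w ^ (k - 1) := by
      rw [← hTval, habsT w]
    have e3 := hptEq w
    have e4 := habsd w
    rw [← ha] at e4
    linarith
  have habs_b : Complex.abs b = Rq E z w := by
    have e2 : Complex.abs (a + b) = ρ * z w ^ (k - 1) := by
      rw [← hTval, habsT w]
    have e4 := habsd w
    rw [← ha] at e4
    have := hptEq w
    linarith [habs_ab]
  obtain ⟨ha2, hb2⟩ := align2 a b habs_ab
  -- derive lam = ρ
  have hyw : y w ≠ 0 := by
    have := hzpos w
    intro h0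
    rw [hzdef] at this
    simp only [h0, map_zero] at this
    exact lt_irrefl 0 this
  have hzcw : ((z w : ℂ)) ≠ 0 := by
    simp only [ne_eq, Complex.ofReal_eq_zero]
    exact (hzpos w).ne'
  have hdC : ((hypDegree E w : ℕ) : ℂ) ≠ 0 := by
    simp only [ne_eq, Nat.cast_eq_zero]
    exact (hdeg w).ne'
  have hlamρ : lam = (ρ : ℂ) := by
    have hA := ha2
    rw [← hTval, habsT w] at hA
    have e4 := habsd w
    rw [← ha] at e4
    rw [e4] at hA
    -- hA : a * ↑(ρ * z w ^ (k-1)) = lam * y w ^(k-1) * ↑(dfun w * z w ^ (k-1))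
    rw [ha] at hA
    have hfac : (hypDegree E w : ℂ) * y w ^ (k - 1) * ((z w : ℂ)) ^ (k - 1) ≠ 0 :=
      mul_ne_zero (mul_ne_zero hdC (pow_ne_zero _ hyw)) (pow_ne_zero _ hzcw)
    apply mul_right_cancel₀ hfac
    have hdfz : ((dfun w : ℝ) : ℂ) = (hypDegree E w : ℂ) := by
      rw [hdfun]
      push_cast
      ring
    push_cast at hA
    rw [hdfz] at hA
    linear_combination -hA
  -- alignment of the sum S
  have hRqpos : 0 < Rq E z w := Rq_pos k E z hzpos w (hdeg w)
  have habs_S : Complex.abs S = Rq E z w := by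
    rw [← habs_b, hb, map_neg_eq_map]
  have halignAll := align (E.filter (fun e => w ∈ e)) (fun e => ∏ p ∈ e.erase w, y p) ?abs
  case abs =>
    rw [← hS, habs_S]
    unfold Rq
    refine Finset.sum_congr rfl fun e' he' => ?_
    rw [map_prod]
  have halignS := halignAll e (Finset.mem_filter.mpr ⟨he, hw⟩)
  simp only [← hS] at halignS
  rw [habs_S] at halignS
  have habsprod : Complex.abs (∏ p ∈ e.erase w, y p) = ∏ p ∈ e.erase w, z p := by
    rw [map_prod]
  rw [habsprod] at halignS
  -- hb2 : b * |a+b| = (a+b) * |b|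
  have hb2' : -S * ((ρ * z w ^ (k-1) : ℝ) : ℂ) = (ρ : ℂ) * y w ^ (k - 1) * ((Rq E z w : ℝ) : ℂ) := by
    have := hb2
    rw [← hTval, habsT w, habs_b, hb, hlamρ] at this
    exact this
  -- combine : ∏ y * |S| = S * ∏z  and  S * |T| = -(T) * |S|
  have hcomb : (∏ p ∈ e.erase w, y p) * ((ρ * z w ^ (k-1) : ℝ) : ℂ)
      = (-(ρ:ℂ) * y w ^ (k - 1)) * ((∏ p ∈ e.erase w, z p : ℝ) : ℂ) := by
    have hRqC : ((Rq E z w : ℝ) : ℂ) ≠ 0 := by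
      simp only [ne_eq, Complex.ofReal_eq_zero]
      exact hRqpos.ne'
    apply mul_right_cancel₀ hRqC
    calc (∏ p ∈ e.erase w, y p) * ((ρ * z w ^ (k-1) : ℝ) : ℂ) * ((Rq E z w : ℝ) : ℂ)
        = ((∏ p ∈ e.erase w, y p) * ((Rq E z w : ℝ) : ℂ)) * ((ρ * z w ^ (k-1) : ℝ) : ℂ) := by
          ring
      _ = (S * ((∏ p ∈ e.erase w, z p : ℝ) : ℂ)) * ((ρ * z w ^ (k-1) : ℝ) : ℂ) := by
          rw [halignS]
      _ = (S * ((ρ * z w ^ (k-1) : ℝ) : ℂ)) * ((∏ p ∈ e.erase w, z p : ℝ) : ℂ) := by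
          ring
      _ = (-(ρ:ℂ) * y w ^ (k - 1)) * ((Rq E z w : ℝ) : ℂ) * ((∏ p ∈ e.erase w, z p : ℝ) : ℂ) := by
          rw [show S * ((ρ * z w ^ (k-1) : ℝ) : ℂ) = -(ρ:ℂ) * y w ^ (k-1) * ((Rq E z w : ℝ) : ℂ)
            from by linear_combination -hb2']
      _ = (-(ρ:ℂ) * y w ^ (k - 1)) * ((∏ p ∈ e.erase w, z p : ℝ) : ℂ) * ((Rq E z w : ℝ) : ℂ) := by
          ring
  -- now same cancellation as in adjacency case
  have hprody : ∏ p ∈ e.erase w, y p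
      = (∏ p ∈ e.erase w, γ p) * ∏ p ∈ e.erase w, (z p : ℂ) := by
    rw [Finset.prod_congr rfl (fun p _ => hyγ p), Finset.prod_mul_distrib]
  have hZc : (∏ p ∈ e.erase w, (z p : ℂ)) ≠ 0 := by
    refine Finset.prod_ne_zero_iff.mpr fun p _ => ?_
    simp only [ne_eq, Complex.ofReal_eq_zero]
    exact (hzpos p).ne'
  have hzck : ((z w : ℂ)) ^ (k - 1) ≠ 0 := pow_ne_zero _ hzcw
  have hρc : (ρ : ℂ) ≠ 0 := by
    simp only [ne_eq, Complex.ofReal_eq_zero]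
    exact hρ.ne'
  have hcast1 : ((ρ * z w ^ (k - 1) : ℝ) : ℂ) = (ρ : ℂ) * ((z w : ℂ)) ^ (k - 1) := by
    push_cast
    ring
  have hcast2 : ((∏ p ∈ e.erase w, z p : ℝ) : ℂ) = ∏ p ∈ e.erase w, (z p : ℂ) := by
    push_cast
    rfl
  rw [hcast1, hcast2, hprody, hyγ w, mul_pow] at hcomb
  have hfact : (ρ : ℂ) * ((z w : ℂ)) ^ (k - 1) * (∏ p ∈ e.erase w, (z p : ℂ)) ≠ 0 :=
    mul_ne_zero (mul_ne_zero hρc hzck) hZc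
  apply mul_right_cancel₀ hfact
  calc (∏ p ∈ e.erase w, γ p) * ((ρ:ℂ) * ((z w : ℂ))^(k-1) * ∏ p ∈ e.erase w, (z p : ℂ))
      = (∏ p ∈ e.erase w, γ p) * (∏ p ∈ e.erase w, (z p : ℂ))
        * ((ρ:ℂ) * ((z w : ℂ))^(k-1)) := by ring
    _ = -(ρ:ℂ) * (γ w ^ (k-1) * ((z w : ℂ))^(k-1)) * ∏ p ∈ e.erase w, (z p : ℂ) := hcomb
    _ = -(γ w ^ (k-1)) * ((ρ:ℂ) * ((z w : ℂ))^(k-1) * ∏ p ∈ e.erase w, (z p : ℂ)) := by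
        ring

lemma lap_normalize (k : ℕ) (hk : 2 ≤ k) (E : Finset (Finset W))
    (hunif : ∀ e ∈ E, e.card = k) (lam : ℂ) (h : IsLapEig k E lam) :
    ∃ u : W → ℂ, ‖u‖ = 1 ∧ ∀ w, ((hypDegree E w : ℂ) - lam) * u w ^ (k - 1)
      = ∑ e ∈ E.filter (fun e => w ∈ e), ∏ p ∈ e.erase w, u p := by
  obtain ⟨x, hx, heq⟩ := h
  have hxn : ‖x‖ ≠ 0 := norm_ne_zero_iff.mpr hx
  set c : ℂ := ((‖x‖⁻¹ : ℝ) : ℂ) with hc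
  refine ⟨c • x, ?_, fun w => ?_⟩
  · rw [norm_smul, hc]
    simp only [Complex.norm_real, norm_inv, norm_norm]
    rw [inv_mul_cancel₀ hxn]
  · have happ : ∀ v, (c • x) v = c * x v := fun v => rfl
    have hprod : ∀ e ∈ E.filter (fun e => w ∈ e),
        ∏ p ∈ e.erase w, (c • x) p = c ^ (k - 1) * ∏ p ∈ e.erase w, x p := by
      intro e he
      obtain ⟨heE, hwe⟩ := Finset.mem_filter.mp he
      rw [Finset.prod_congr rfl (fun p _ => happ p), Finset.prod_mul_distrib,
        Finset.prod_const, Finset.card_erase_of_mem hwe, hunif e heE]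
    rw [Finset.sum_congr rfl hprod, ← Finset.mul_sum, ← heq w, happ w, mul_pow]
    ring

lemma lap_attain (k : ℕ) (hk : 2 ≤ k) (E : Finset (Finset W))
    (hunif : ∀ e ∈ E, e.card = k) (ρ : ℝ) (hρ : 0 < ρ)
    (hub : ∀ lam : ℂ, IsLapEig k E lam → Complex.abs lam ≤ ρ)
    (hsup : sSup {r : ℝ | ∃ lam : ℂ, IsLapEig k E lam ∧ r = Complex.abs lam} = ρ) :
    ∃ lam : ℂ, IsLapEig k E lam ∧ Complex.abs lam = ρ := by
  set S : Set ℝ := {r : ℝ | ∃ lam : ℂ, IsLapEig k E lam ∧ r = Complex.abs lam} with hS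
  have hSne : S.Nonempty := by
    rcases Set.eq_empty_or_nonempty S with h | h
    · rw [h, Real.sSup_empty] at hsup
      exact absurd hsup.symm hρ.ne'
    · exact h
  have hseq : ∀ n : ℕ, ∃ lam : ℂ, IsLapEig k E lam ∧ ρ - 1/(n+1) < Complex.abs lam := by
    intro n
    have hlt : ρ - 1/(n+1) < sSup S := by
      rw [hsup]
      have : (0:ℝ) < 1/(n+1) := by positivity
      linarith
    obtain ⟨r, hrS, hrlt⟩ := exists_lt_of_lt_csSup hSne hlt
    obtain ⟨lam, hlam, rfl⟩ := hrS
    exact ⟨lam, hlam, hrlt⟩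
  choose lamn hlamEig hlamLt using hseq
  have hnorm : ∀ n : ℕ, ∃ u : W → ℂ, ‖u‖ = 1 ∧
      ∀ w, ((hypDegree E w : ℂ) - lamn n) * u w ^ (k - 1)
        = ∑ e ∈ E.filter (fun e => w ∈ e), ∏ p ∈ e.erase w, u p :=
    fun n => lap_normalize k hk E hunif (lamn n) (hlamEig n)
  choose un hunorm huEq using hnorm
  set C : Set (ℂ × (W → ℂ)) :=
    (Metric.closedBall (0:ℂ) ρ) ×ˢ (Metric.sphere (0 : W → ℂ) 1) with hC
  have hCcomp : IsCompact C :=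
    (isCompact_closedBall _ _).prod (isCompact_sphere _ _)
  have hmem : ∀ n : ℕ, (lamn n, un n) ∈ C := by
    intro n
    constructor
    · rw [Metric.mem_closedBall, dist_zero_right]
      exact hub (lamn n) (hlamEig n)
    · rw [Metric.mem_sphere, dist_zero_right]
      exact hunorm n
  obtain ⟨⟨lam, u⟩, hmemC, φ, hφmono, htend⟩ := hCcomp.tendsto_subseq hmem
  have hlamtend : Filter.Tendsto (fun n => lamn (φ n)) Filter.atTop (nhds lam) := by
    have := (continuous_fst.tendsto ((lam, u) : ℂ × (W → ℂ))).comp htend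
    exact this
  have hutend : Filter.Tendsto (fun n => un (φ n)) Filter.atTop (nhds u) := by
    have := (continuous_snd.tendsto ((lam, u) : ℂ × (W → ℂ))).comp htend
    exact this
  have habs_tend : Filter.Tendsto (fun n => Complex.abs (lamn (φ n))) Filter.atTop
      (nhds (Complex.abs lam)) := (Complex.continuous_abs.tendsto lam).comp hlamtend
  have hlow_tend : Filter.Tendsto (fun n : ℕ => ρ - 1/((φ n : ℝ)+1)) Filter.atTop
      (nhds ρ) := by
    have h1 : Filter.Tendsto (fun n : ℕ => 1/((n:ℝ)+1)) Filter.atTop (nhds 0) :=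
      tendsto_one_div_add_atTop_nhds_zero_nat
    have h2 : Filter.Tendsto (fun n : ℕ => 1/((φ n : ℝ)+1)) Filter.atTop (nhds 0) :=
      h1.comp hφmono.tendsto_atTop
    have h3 := (tendsto_const_nhds (x := ρ) (f := Filter.atTop (α := ℕ))).sub h2
    simpa using h3
  have habs : Complex.abs lam = ρ := by
    refine le_antisymm ?_ ?_
    · refine le_of_tendsto habs_tend (Filter.Eventually.of_forall fun n => ?_)
      exact hub _ (hlamEig (φ n))
    · refine le_of_tendsto_of_tendsto' hlow_tend habs_tend fun n => ?_
      exact (hlamLt (φ n)).le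
  have hune : u ≠ 0 := by
    have h1 := hmemC.2
    rw [Metric.mem_sphere, dist_zero_right] at h1
    intro h0
    rw [h0, norm_zero] at h1
    norm_num at h1
  refine ⟨lam, ⟨u, hune, fun w => ?_⟩, habs⟩
  set G : ℂ × (W → ℂ) → ℂ := fun q =>
    ((hypDegree E w : ℂ) - q.1) * (q.2 w) ^ (k - 1)
      - ∑ e ∈ E.filter (fun e => w ∈ e), ∏ p ∈ e.erase w, q.2 p with hG
  have hGcont : Continuous G := by
    apply Continuous.sub
    · exact (continuous_const.sub continuous_fst).mul
        (((continuous_apply w).comp continuous_snd).pow _)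
    · exact continuous_finset_sum _ fun e _ =>
        continuous_finset_prod _ fun p _ => (continuous_apply p).comp continuous_snd
  have hGn : ∀ n, G (lamn (φ n), un (φ n)) = 0 := by
    intro n
    rw [hG]
    simp only
    rw [huEq (φ n) w]
    ring
  have hGlim : Filter.Tendsto (fun n => G (lamn (φ n), un (φ n))) Filter.atTop
      (nhds (G (lam, u))) := by
    have := (hGcont.tendsto ((lam, u) : ℂ × (W → ℂ))).comp htend
    exact this
  have hG0 : G (lam, u) = 0 := by
    have h1 : Filter.Tendsto (fun n => G (lamn (φ n), un (φ n))) Filter.atTop (nhds 0) := by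
      simp only [hGn]
      exact tendsto_const_nhds
    exact tendsto_nhds_unique hGlim h1
  rw [hG] at hG0
  simp only at hG0
  linear_combination hG0

end Stmt15Aux

open Stmt15Aux in
theorem stmt15 {W : Type*} [Fintype W] [DecidableEq W] (k : ℕ)
    (hk : 2 ≤ k) (hkeven : Even k)
    (E : Finset (Finset W)) (hunif : ∀ e ∈ E, e.card = k) (hedge : E.Nonempty)
    (hconn : ∀ a b : W,
      Relation.ReflTransGen (fun p q => ∃ e ∈ E, p ∈ e ∧ q ∈ e) a b)
    (hnob : ¬ ∃ W₁ : Finset W, W₁.Nonempty ∧ W₁ᶜ.Nonempty ∧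
      ∀ e ∈ E, Odd (e ∩ W₁).card) :
    List.TFAE
      [ sSup {r : ℝ | ∃ lam : ℂ, IsLapEig k E lam ∧ r = ‖lam‖} =
          sSup {r : ℝ | ∃ lam : ℂ, IsSignlessEig k E lam ∧ r = ‖lam‖},
        ∃ gamma : W → ℂ, (∀ w, ‖gamma w‖ = 1) ∧
          ∀ t : Fin k → W,
            diagEnt k E t - adjEnt k E t =
              (gamma (t ⟨0, by omega⟩))⁻¹ ^ (k - 1) *
                ((diagEnt k E t + adjEnt k E t) *
                  ∏ i ∈ Finset.univ.erase (⟨0, by omega⟩ : Fin k), gamma (t i)),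
        {lam : ℂ | IsLapEig k E lam} = {lam : ℂ | IsSignlessEig k E lam},
        ∃ gamma : W → ℂ, (∀ w, ‖gamma w‖ = 1) ∧
          ∀ t : Fin k → W,
            -(adjEnt k E t) =
              (gamma (t ⟨0, by omega⟩))⁻¹ ^ (k - 1) *
                (adjEnt k E t *
                  ∏ i ∈ Finset.univ.erase (⟨0, by omega⟩ : Fin k), gamma (t i)),
        ∀ lam : ℂ, IsAdjEig k E lam ↔ IsAdjEig k E (-lam),
        IsAdjEig k E
          (-(sSup {r : ℝ | ∃ lam : ℂ, IsAdjEig k E lam ∧ r = ‖lam‖} : ℝ)) ] := by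
  simp only [← Complex.abs_apply']
  obtain ⟨e1, he1⟩ := hedge
  have hWne : Nonempty W := by
    obtain ⟨w, -⟩ := Finset.card_pos.mp (by rw [hunif e1 he1]; omega : 0 < e1.card)
    exact ⟨w⟩
  obtain ⟨ρA, zA, hρA, hzA, hNA, hbdA, hlagA, hposA⟩ :=
    perron k hk E hunif ⟨e1, he1⟩ hconn (fun _ => 0) (fun _ => le_refl 0)
  obtain ⟨ρQ, zQ, hρQ, hzQ, hNQ, hbdQ, hlagQ, hposQ⟩ :=
    perron k hk E hunif ⟨e1, he1⟩ hconn (fun w => (hypDegree E w : ℝ))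
      (fun w => Nat.cast_nonneg _)
  have hdeg : ∀ w, 0 < hypDegree E w := degree_pos k hk E hunif ⟨e1, he1⟩ hconn
  have hlagA' : ∀ w, ρA * zA w ^ (k - 1) = Rq E zA w := by
    intro w
    have := hlagA w
    simpa using this
  have hAdjρA : IsAdjEig k E ((ρA : ℝ) : ℂ) := isAdjEig_of_lag k E ρA zA hzA hlagA'
  have hQρQ : IsSignlessEig k E ((ρQ : ℝ) : ℂ) :=
    isSignlessEig_of_lag k E ρQ zQ hzQ hlagQ
  have hSA : sSup {r : ℝ | ∃ lam : ℂ, IsAdjEig k E lam ∧ r = Complex.abs lam} = ρA := by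
    apply csSup_eq_of_mem_ub
    · exact ⟨((ρA : ℝ) : ℂ), hAdjρA, by rw [Complex.abs_ofReal, abs_of_pos hρA]⟩
    · rintro r ⟨lam, hl, rfl⟩
      exact adjEig_le k hk E hunif ρA hbdA lam hl
  have hSQ : sSup {r : ℝ | ∃ lam : ℂ, IsSignlessEig k E lam ∧ r = Complex.abs lam}
      = ρQ := by
    apply csSup_eq_of_mem_ub
    · exact ⟨((ρQ : ℝ) : ℂ), hQρQ, by rw [Complex.abs_ofReal, abs_of_pos hρQ]⟩
    · rintro r ⟨lam, hl, rfl⟩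
      exact signlessEig_le k hk E hunif ρQ hbdQ lam hl
  have hγne : ∀ γ : W → ℂ, (∀ w, Complex.abs (γ w) = 1) → ∀ w, γ w ≠ 0 := by
    intro γ hγ1 w h0
    have := hγ1 w
    rw [h0] at this
    simp at this
  tfae_have 1 → 2 := by
    intro h1
    have hsupL : sSup {r : ℝ | ∃ lam : ℂ, IsLapEig k E lam ∧ r = Complex.abs lam}
        = ρQ := by
      rw [h1, hSQ]
    obtain ⟨lam, hlam, habs⟩ := lap_attain k hk E hunif ρQ hρQ
      (fun lam hl => lapEig_le k hk E hunif ρQ hbdQ lam hl) hsupL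
    obtain ⟨y, hy, heqy⟩ := hlam
    obtain ⟨γ, hγ1, hrel⟩ := eq_case_lap k hk E hunif ρQ hρQ hbdQ hposQ hdeg lam habs
      y hy heqy
    exact ⟨γ, hγ1, cond2_of_edgeRel k hk E hunif γ (hγne γ hγ1) hrel⟩
  tfae_have 2 → 3 := by
    rintro ⟨γ, hγ1, hcond⟩
    have hrel := edgeRel_of_cond2 k hk E hunif γ (hγne γ hγ1) hcond
    ext lam
    constructor
    · exact fun h => lap_signless_transform k E γ (hγne γ hγ1) hrel lam h
    · exact fun h => signless_lap_transform k E γ (hγne γ hγ1) hrel lam h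
  tfae_have 3 → 1 := by
    intro h3
    have hiff : ∀ lam : ℂ, IsLapEig k E lam ↔ IsSignlessEig k E lam :=
      fun lam => Set.ext_iff.mp h3 lam
    have hseteq : {r : ℝ | ∃ lam : ℂ, IsLapEig k E lam ∧ r = Complex.abs lam}
        = {r : ℝ | ∃ lam : ℂ, IsSignlessEig k E lam ∧ r = Complex.abs lam} := by
      ext r
      constructor
      · rintro ⟨lam, hl, rfl⟩
        exact ⟨lam, (hiff lam).mp hl, rfl⟩
      · rintro ⟨lam, hl, rfl⟩
        exact ⟨lam, (hiff lam).mpr hl, rfl⟩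
    rw [hseteq]
  tfae_have 2 → 4 := by
    rintro ⟨γ, hγ1, hcond⟩
    have hrel := edgeRel_of_cond2 k hk E hunif γ (hγne γ hγ1) hcond
    exact ⟨γ, hγ1, core4 k hk E hunif γ (hγne γ hγ1) hrel⟩
  tfae_have 4 → 2 := by
    rintro ⟨γ, hγ1, hcond⟩
    have hrel := edgeRel_of_cond4 k hk E hunif γ (hγne γ hγ1) hcond
    exact ⟨γ, hγ1, cond2_of_edgeRel k hk E hunif γ (hγne γ hγ1) hrel⟩
  tfae_have 4 → 5 := by
    rintro ⟨γ, hγ1, hcond⟩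
    have hrel := edgeRel_of_cond4 k hk E hunif γ (hγne γ hγ1) hcond
    intro lam
    constructor
    · exact fun h => adj_transform k E γ (hγne γ hγ1) hrel lam h
    · intro h
      have := adj_transform k E γ (hγne γ hγ1) hrel (-lam) h
      rwa [neg_neg] at this
  tfae_have 5 → 6 := by
    intro h5
    have h6 := (h5 ((ρA : ℝ) : ℂ)).mp hAdjρA
    rw [hSA]
    exact h6
  tfae_have 6 → 4 := by
    intro h6
    rw [hSA] at h6
    obtain ⟨y, hy, heqy⟩ := h6
    have heqy' : ∀ w, ((-ρA : ℝ) : ℂ) * y w ^ (k - 1)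
        = ∑ e ∈ E.filter (fun e => w ∈ e), ∏ p ∈ e.erase w, y p := by
      intro w
      rw [Complex.ofReal_neg]
      exact heqy w
    obtain ⟨γ, hγ1, hrel⟩ := eq_case_adj k hk E hunif ρA hρA hbdA hposA y hy heqy'
    exact ⟨γ, hγ1, core4 k hk E hunif γ (hγne γ hγ1) hrel⟩
  tfae_finish
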